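/- arXiv:1404.0110 — 10 statements merged into one kernel-verified Lean document; each statement's English description precedes it below -/
import Mathlib

section
/- Let q be a prime power such that 3 does not divide q-1. Then for all vectors u, v ∈ D_q, the intersection of the restricted extended balls satisfies |Ẽ(u) ∩ Ẽ(v)| ≥ 2(q-1). -/
open Set Pointwise

variable {F : Type*} [Field F]

/-- Hamming distance on `𝔽_q³`. -/
noncomputable def hdist (u v : Fin 3 → F) : ℕ := Set.ncard {i : Fin 3 | u i ≠ v i}

/-- The ball of radius 1 centered at `u`. -/
def ball (u : Fin 3 → F) : Set (Fin 3 → F) := {v | hdist u v ≤ 1}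

/-- The extended ball of `u`: the union of the balls centered at scalar multiples of `u`. -/
def extBall (u : Fin 3 → F) : Set (Fin 3 → F) := ⋃ l : F, ball (l • u)

/-- `D_q`: vectors with pairwise distinct, nonzero coordinates. -/
def Dq : Set (Fin 3 → F) :=
  {u | u 0 ≠ u 1 ∧ u 0 ≠ u 2 ∧ u 1 ≠ u 2 ∧ u 0 ≠ 0 ∧ u 1 ≠ 0 ∧ u 2 ≠ 0}

/-- `B̃(u) = B(u) ∩ D_q`. -/
def ballD (u : Fin 3 → F) : Set (Fin 3 → F) := ball u ∩ Dq

/-- `Ẽ(u) = E(u) ∩ D_q`. -/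
def extBallD (u : Fin 3 → F) : Set (Fin 3 → F) := extBall u ∩ Dq

/-- `H` is a short covering if the extended balls centered at its elements cover the space. -/
def ShortCovering (H : Set (Fin 3 → F)) : Prop := (⋃ h ∈ H, extBall h) = Set.univ

/-- punctured line through c -/
def scLine (c : Fin 3 → F) : Set (Fin 3 → F) := {w | ∃ l : F, l ≠ 0 ∧ w = l • c}

lemma sc_smul_mem_Dq {c : Fin 3 → F} (hc : c ∈ Dq) {l : F} (hl : l ≠ 0) : l • c ∈ Dq := by
  obtain ⟨h1, h2, h3, h4, h5, h6⟩ := hc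
  refine ⟨fun h => h1 (mul_left_cancel₀ hl h), fun h => h2 (mul_left_cancel₀ hl h),
    fun h => h3 (mul_left_cancel₀ hl h), mul_ne_zero hl h4, mul_ne_zero hl h5, mul_ne_zero hl h6⟩

lemma sc_line_subset {u c : Fin 3 → F} (hc : c ∈ Dq) (t : F) (i : Fin 3)
    (h : ∀ j, j ≠ i → c j = t * u j) : scLine c ⊆ extBallD u := by
  rintro w ⟨l, hl, rfl⟩
  refine ⟨Set.mem_iUnion.2 ⟨l * t, ?_⟩, sc_smul_mem_Dq hc hl⟩
  show hdist ((l * t) • u) (l • c) ≤ 1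
  have hsub : {j : Fin 3 | ((l * t) • u) j ≠ (l • c) j} ⊆ {i} := by
    intro j hj
    simp only [Set.mem_setOf_eq, Pi.smul_apply, smul_eq_mul] at hj
    by_contra hji
    exact hj (by rw [h j hji]; ring)
  calc hdist ((l * t) • u) (l • c) ≤ ({i} : Set (Fin 3)).ncard :=
        Set.ncard_le_ncard hsub (Set.finite_singleton i)
    _ = 1 := Set.ncard_singleton i

lemma sc_line_ncard [Fintype F] {c : Fin 3 → F} (hc : c 0 ≠ 0) :
    (scLine c).ncard = Fintype.card F - 1 := by
  have himg : scLine c = (fun l : F => l • c) '' {l : F | l ≠ 0} := by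
    ext w; constructor
    · rintro ⟨l, hl, rfl⟩; exact ⟨l, hl, rfl⟩
    · rintro ⟨l, hl, rfl⟩; exact ⟨l, hl, rfl⟩
  have hinj : Set.InjOn (fun l : F => l • c) {l : F | l ≠ 0} := by
    intro a _ b _ hab
    have := congrFun hab 0
    simpa [hc] using this
  rw [himg, Set.ncard_image_of_injOn hinj]
  have : {l : F | l ≠ 0} = Set.univ \ {0} := by ext; simp
  rw [this, Set.ncard_diff (Set.subset_univ _), Set.ncard_univ, Set.ncard_singleton,
    Nat.card_eq_fintype_card]

lemma sc_main_two [Fintype F] {u v c c' : Fin 3 → F}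
    (hsub : scLine c ⊆ extBallD u ∩ extBallD v)
    (hsub' : scLine c' ⊆ extBallD u ∩ extBallD v)
    (hc0 : c 0 ≠ 0) (hc'0 : c' 0 ≠ 0)
    (hne : ∀ m : F, m • c ≠ c') :
    2 * (Fintype.card F - 1) ≤ (extBallD u ∩ extBallD v).ncard := by
  have hdisj : Disjoint (scLine c) (scLine c') := by
    rw [Set.disjoint_left]
    rintro w ⟨l, hl, rfl⟩ ⟨m, hm, hw⟩
    exact hne (m⁻¹ * l) (by rw [mul_smul, hw, inv_smul_smul₀ hm])
  have hcard : (scLine c ∪ scLine c').ncard = 2 * (Fintype.card F - 1) := by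
    rw [Set.ncard_union_eq hdisj (Set.toFinite _) (Set.toFinite _),
      sc_line_ncard hc0, sc_line_ncard hc'0]
    ring
  rw [← hcard]
  exact Set.ncard_le_ncard (Set.union_subset hsub hsub') (Set.toFinite _)

lemma sc_cube_inj [Fintype F] (h3 : ¬ (3 ∣ Fintype.card F - 1)) {t s : F} (ht : t ≠ 0)
    (hs : s ≠ 0) (h : t ^ 3 = s ^ 3) : t = s := by
  have hco : Nat.Coprime 3 (Fintype.card F - 1) :=
    (Nat.Prime.coprime_iff_not_dvd Nat.prime_three).2 h3
  set z : Fˣ := Units.mk0 t ht * (Units.mk0 s hs)⁻¹ with hz_def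
  have key : (t * s⁻¹) ^ 3 = 1 := by
    rw [mul_pow, h, ← mul_pow, mul_inv_cancel₀ hs, one_pow]
  have hz : z ^ 3 = 1 := by
    apply Units.ext
    simpa [hz_def] using key
  have hord : orderOf z ∣ 3 := orderOf_dvd_of_pow_eq_one hz
  have hord2 : orderOf z ∣ Fintype.card F - 1 := by
    have := orderOf_dvd_natCard z
    rwa [Nat.card_units, Nat.card_eq_fintype_card] at this
  have h1 : orderOf z = 1 := Nat.dvd_one.mp (hco ▸ Nat.dvd_gcd hord hord2)
  have hz1 : z = 1 := orderOf_eq_one_iff.mp h1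
  have : t * s⁻¹ = 1 := by
    have := congrArg Units.val hz1
    simpa [hz_def] using this
  exact (mul_inv_eq_one₀ hs).mp this

lemma sc_exists_smul {u v : Fin 3 → F} (hu0 : u 0 ≠ 0)
    (q01 : u 0 * v 1 = u 1 * v 0) (q02 : u 0 * v 2 = u 2 * v 0) : ∃ m : F, v = m • u := by
  refine ⟨v 0 * (u 0)⁻¹, funext fun j => ?_⟩
  fin_cases j
  · show v 0 = v 0 * (u 0)⁻¹ * u 0
    field_simp
  · show v 1 = v 0 * (u 0)⁻¹ * u 1
    field_simp
    linear_combination q01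
  · show v 2 = v 0 * (u 0)⁻¹ * u 2
    field_simp
    linear_combination q02

lemma sc_mem_Dq3 {a b c : F} (h01 : a ≠ b) (h02 : a ≠ c) (h12 : b ≠ c)
    (h0 : a ≠ 0) (h1 : b ≠ 0) (h2 : c ≠ 0) : (![a, b, c] : Fin 3 → F) ∈ Dq :=
  ⟨h01, h02, h12, h0, h1, h2⟩

lemma sc_caseA [Fintype F] {u v : Fin 3 → F} (hu : u ∈ Dq) (hv : v ∈ Dq)
    (hprop : ∀ m : F, v ≠ m • u)
    (hcyc : ¬ (u 0 * v 1 = u 1 * v 2 ∧ u 1 * v 2 = u 2 * v 0)) :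
    2 * (Fintype.card F - 1) ≤ (extBallD u ∩ extBallD v).ncard := by
  obtain ⟨hu01, hu02, hu12, hu0, hu1, hu2⟩ := hu
  obtain ⟨hv01, hv02, hv12, hv0, hv1, hv2⟩ := hv
  -- the three candidate direction vectors
  set cA : Fin 3 → F := ![u 2 * v 0, u 1 * v 2, u 2 * v 2] with hcA
  set cB : Fin 3 → F := ![u 0 * v 1, u 1 * v 1, u 1 * v 2] with hcB
  set cC : Fin 3 → F := ![u 0 * v 0, u 0 * v 1, u 2 * v 0] with hcC
  have hAu : ∀ j, j ≠ (0 : Fin 3) → cA j = v 2 * u j := by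
    intro j hj; fin_cases j
    · exact absurd rfl hj
    · show u 1 * v 2 = v 2 * u 1; ring
    · show u 2 * v 2 = v 2 * u 2; ring
  have hAv : ∀ j, j ≠ (1 : Fin 3) → cA j = u 2 * v j := by
    intro j hj; fin_cases j
    · show u 2 * v 0 = u 2 * v 0; ring
    · exact absurd rfl hj
    · show u 2 * v 2 = u 2 * v 2; ring
  have hBu : ∀ j, j ≠ (2 : Fin 3) → cB j = v 1 * u j := by
    intro j hj; fin_cases j
    · show u 0 * v 1 = v 1 * u 0; ring
    · show u 1 * v 1 = v 1 * u 1; ring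
    · exact absurd rfl hj
  have hBv : ∀ j, j ≠ (0 : Fin 3) → cB j = u 1 * v j := by
    intro j hj; fin_cases j
    · exact absurd rfl hj
    · show u 1 * v 1 = u 1 * v 1; ring
    · show u 1 * v 2 = u 1 * v 2; ring
  have hCu : ∀ j, j ≠ (1 : Fin 3) → cC j = v 0 * u j := by
    intro j hj; fin_cases j
    · show u 0 * v 0 = v 0 * u 0; ring
    · exact absurd rfl hj
    · show u 2 * v 0 = v 0 * u 2; ring
  have hCv : ∀ j, j ≠ (2 : Fin 3) → cC j = u 0 * v j := by
    intro j hj; fin_cases j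
    · show u 0 * v 0 = u 0 * v 0; ring
    · show u 0 * v 1 = u 0 * v 1; ring
    · exact absurd rfl hj
  by_cases hE1 : u 2 * v 0 = u 1 * v 2
  · -- use lines cB and cC
    have hC20 : u 1 * v 2 ≠ u 0 * v 1 := fun h => hcyc ⟨h.symm, hE1.symm⟩
    have hC12 : u 0 * v 1 ≠ u 2 * v 0 := fun h => hcyc ⟨h.trans hE1, hE1.symm⟩
    have hBDq : cB ∈ Dq := sc_mem_Dq3
      (fun h => hu01 (mul_right_cancel₀ hv1 h)) (Ne.symm hC20)
      (fun h => hv12 (mul_left_cancel₀ hu1 h))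
      (mul_ne_zero hu0 hv1) (mul_ne_zero hu1 hv1) (mul_ne_zero hu1 hv2)
    have hCDq : cC ∈ Dq := sc_mem_Dq3
      (fun h => hv01 (mul_left_cancel₀ hu0 h)) (fun h => hu02 (mul_right_cancel₀ hv0 h))
      hC12
      (mul_ne_zero hu0 hv0) (mul_ne_zero hu0 hv1) (mul_ne_zero hu2 hv0)
    refine sc_main_two
      (Set.subset_inter (sc_line_subset hBDq (v 1) 2 hBu) (sc_line_subset hBDq (u 1) 0 hBv))
      (Set.subset_inter (sc_line_subset hCDq (v 0) 1 hCu) (sc_line_subset hCDq (u 0) 2 hCv))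
      (mul_ne_zero hu0 hv1) (mul_ne_zero hu0 hv0) ?_
    intro m hm
    have h0 : m * (u 0 * v 1) = u 0 * v 0 := congrFun hm 0
    have h1 : m * (u 1 * v 1) = u 0 * v 1 := congrFun hm 1
    have h2 : m * (u 1 * v 2) = u 2 * v 0 := congrFun hm 2
    have r0 : m * v 1 = v 0 := mul_left_cancel₀ hu0 (by linear_combination h0)
    have r1 : m * u 1 = u 0 := mul_left_cancel₀ hv1 (by linear_combination h1)
    have q01 : u 0 * v 1 = u 1 * v 0 := by linear_combination u 1 * r0 - v 1 * r1
    have q02 : u 0 * v 2 = u 2 * v 0 := by linear_combination h2 - v 2 * r1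
    obtain ⟨mm, hmm⟩ := sc_exists_smul hu0 q01 q02
    exact hprop mm hmm
  · by_cases hE2 : u 1 * v 2 = u 0 * v 1
    · -- use lines cA and cC
      have hC12 : u 0 * v 1 ≠ u 2 * v 0 := fun h => hcyc ⟨hE2.symm, hE2.trans h⟩
      have hADq : cA ∈ Dq := sc_mem_Dq3
        hE1 (fun h => hv02 (mul_left_cancel₀ hu2 h))
        (fun h => hu12 (mul_right_cancel₀ hv2 h))
        (mul_ne_zero hu2 hv0) (mul_ne_zero hu1 hv2) (mul_ne_zero hu2 hv2)
      have hCDq : cC ∈ Dq := sc_mem_Dq3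
        (fun h => hv01 (mul_left_cancel₀ hu0 h)) (fun h => hu02 (mul_right_cancel₀ hv0 h))
        hC12
        (mul_ne_zero hu0 hv0) (mul_ne_zero hu0 hv1) (mul_ne_zero hu2 hv0)
      refine sc_main_two
        (Set.subset_inter (sc_line_subset hADq (v 2) 0 hAu) (sc_line_subset hADq (u 2) 1 hAv))
        (Set.subset_inter (sc_line_subset hCDq (v 0) 1 hCu) (sc_line_subset hCDq (u 0) 2 hCv))
        (mul_ne_zero hu2 hv0) (mul_ne_zero hu0 hv0) ?_
      intro m hm
      have h0 : m * (u 2 * v 0) = u 0 * v 0 := congrFun hm 0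
      have h1 : m * (u 1 * v 2) = u 0 * v 1 := congrFun hm 1
      have h2 : m * (u 2 * v 2) = u 2 * v 0 := congrFun hm 2
      have r0 : m * u 2 = u 0 := mul_right_cancel₀ hv0 (by linear_combination h0)
      have r2 : m * v 2 = v 0 := mul_left_cancel₀ hu2 (by linear_combination h2)
      have hm0 : m ≠ 0 := by
        intro h; rw [h, zero_mul] at r0; exact hu0 r0.symm
      have q02 : u 0 * v 2 = u 2 * v 0 := by linear_combination u 2 * r2 - v 2 * r0
      have q12 : u 1 * v 2 = u 2 * v 1 :=
        mul_left_cancel₀ hm0 (by linear_combination h1 - v 1 * r0)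
      have q01 : u 0 * v 1 = u 1 * v 0 :=
        mul_right_cancel₀ hv2 (by linear_combination v 1 * q02 - v 0 * q12)
      obtain ⟨mm, hmm⟩ := sc_exists_smul hu0 q01 q02
      exact hprop mm hmm
    · -- use lines cA and cB
      have hADq : cA ∈ Dq := sc_mem_Dq3
        hE1 (fun h => hv02 (mul_left_cancel₀ hu2 h))
        (fun h => hu12 (mul_right_cancel₀ hv2 h))
        (mul_ne_zero hu2 hv0) (mul_ne_zero hu1 hv2) (mul_ne_zero hu2 hv2)
      have hBDq : cB ∈ Dq := sc_mem_Dq3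
        (fun h => hu01 (mul_right_cancel₀ hv1 h)) (Ne.symm hE2)
        (fun h => hv12 (mul_left_cancel₀ hu1 h))
        (mul_ne_zero hu0 hv1) (mul_ne_zero hu1 hv1) (mul_ne_zero hu1 hv2)
      refine sc_main_two
        (Set.subset_inter (sc_line_subset hADq (v 2) 0 hAu) (sc_line_subset hADq (u 2) 1 hAv))
        (Set.subset_inter (sc_line_subset hBDq (v 1) 2 hBu) (sc_line_subset hBDq (u 1) 0 hBv))
        (mul_ne_zero hu2 hv0) (mul_ne_zero hu0 hv1) ?_
      intro m hm
      have h0 : m * (u 2 * v 0) = u 0 * v 1 := congrFun hm 0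
      have h1 : m * (u 1 * v 2) = u 1 * v 1 := congrFun hm 1
      have h2 : m * (u 2 * v 2) = u 1 * v 2 := congrFun hm 2
      have r1 : m * v 2 = v 1 := mul_left_cancel₀ hu1 (by linear_combination h1)
      have r2 : m * u 2 = u 1 := mul_right_cancel₀ hv2 (by linear_combination h2)
      have hm0 : m ≠ 0 := by
        intro h; rw [h, zero_mul] at r2; exact hu1 r2.symm
      have q12 : u 1 * v 2 = u 2 * v 1 := by linear_combination u 2 * r1 - v 2 * r2
      have q02 : u 0 * v 2 = u 2 * v 0 :=
        (mul_left_cancel₀ hm0 (by linear_combination h0 - u 0 * r1)).symm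
      have q01 : u 0 * v 1 = u 1 * v 0 :=
        mul_right_cancel₀ hv2 (by linear_combination v 1 * q02 - v 0 * q12)
      obtain ⟨mm, hmm⟩ := sc_exists_smul hu0 q01 q02
      exact hprop mm hmm

theorem stmt_0 (q : ℕ) (hq : IsPrimePow q) (F : Type*) [Field F] [Fintype F]
    (hcard : Fintype.card F = q) (h3 : ¬ (3 ∣ q - 1)) :
    ∀ u ∈ (Dq : Set (Fin 3 → F)), ∀ v ∈ (Dq : Set (Fin 3 → F)),
      2 * (q - 1) ≤ (extBallD u ∩ extBallD v).ncard := by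
  subst hcard
  classical
  intro u hu v hv
  have hu' := hu
  have hv' := hv
  obtain ⟨hu01, hu02, hu12, hu0, hu1, hu2⟩ := hu'
  obtain ⟨hv01, hv02, hv12, hv0, hv1, hv2⟩ := hv'
  by_cases hprop : ∃ m : F, v = m • u
  · -- proportional case
    obtain ⟨m, rfl⟩ := hprop
    have hm0 : m ≠ 0 := by rintro rfl; exact hu0 (by simpa using hv0 (zero_mul (u 0)))
    -- find x outside {0, u 0, u 1, u 2}
    have hscard : ({0, u 0, u 1, u 2} : Finset F).card = 4 := by
      rw [Finset.card_insert_of_notMem, Finset.card_insert_of_notMem,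
        Finset.card_insert_of_notMem, Finset.card_singleton]
      · simpa using hu12
      · simp only [Finset.mem_insert, Finset.mem_singleton]; push_neg
        exact ⟨hu01, hu02⟩
      · simp only [Finset.mem_insert, Finset.mem_singleton]; push_neg
        exact ⟨Ne.symm hu0, Ne.symm hu1, Ne.symm hu2⟩
    have h5 : 5 ≤ Fintype.card F := by
      have h4 : 4 ≤ Fintype.card F := by
        rw [← hscard, ← Finset.card_univ]; exact Finset.card_le_univ _
      have hne4 : Fintype.card F ≠ 4 := by intro h; rw [h] at h3; exact h3 (by norm_num)
      omega
    have hne : (({0, u 0, u 1, u 2} : Finset F)ᶜ).Nonempty := by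
      rw [← Finset.card_pos, Finset.card_compl, hscard]; omega
    obtain ⟨x, hx⟩ := hne
    rw [Finset.mem_compl] at hx
    simp only [Finset.mem_insert, Finset.mem_singleton] at hx
    push_neg at hx
    obtain ⟨hx0, hxu0, hxu1, hxu2⟩ := hx
    have hcDq : (![x, u 1, u 2] : Fin 3 → F) ∈ Dq := sc_mem_Dq3 hxu1 hxu2 hu12 hx0 hu1 hu2
    have hc'Dq : (![u 0, x, u 2] : Fin 3 → F) ∈ Dq :=
      sc_mem_Dq3 (Ne.symm hxu0) hu02 hxu2 hu0 hx0 hu2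
    have hcu : ∀ j, j ≠ (0 : Fin 3) → (![x, u 1, u 2] : Fin 3 → F) j = 1 * u j := by
      intro j hj; fin_cases j
      · exact absurd rfl hj
      · show u 1 = 1 * u 1; ring
      · show u 2 = 1 * u 2; ring
    have hcv : ∀ j, j ≠ (0 : Fin 3) → (![x, u 1, u 2] : Fin 3 → F) j = m⁻¹ * (m • u) j := by
      intro j hj; fin_cases j
      · exact absurd rfl hj
      · show u 1 = m⁻¹ * (m * u 1); field_simp
      · show u 2 = m⁻¹ * (m * u 2); field_simp
    have hc'u : ∀ j, j ≠ (1 : Fin 3) → (![u 0, x, u 2] : Fin 3 → F) j = 1 * u j := by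
      intro j hj; fin_cases j
      · show u 0 = 1 * u 0; ring
      · exact absurd rfl hj
      · show u 2 = 1 * u 2; ring
    have hc'v : ∀ j, j ≠ (1 : Fin 3) → (![u 0, x, u 2] : Fin 3 → F) j = m⁻¹ * (m • u) j := by
      intro j hj; fin_cases j
      · show u 0 = m⁻¹ * (m * u 0); field_simp
      · exact absurd rfl hj
      · show u 2 = m⁻¹ * (m * u 2); field_simp
    refine sc_main_two
      (Set.subset_inter (sc_line_subset hcDq 1 0 hcu) (sc_line_subset hcDq m⁻¹ 0 hcv))
      (Set.subset_inter (sc_line_subset hc'Dq 1 1 hc'u) (sc_line_subset hc'Dq m⁻¹ 1 hc'v))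
      hx0 hu0 ?_
    intro μ h
    have h0 : μ * x = u 0 := congrFun h 0
    have h2 : μ * u 2 = u 2 := congrFun h 2
    have hμ : μ = 1 := mul_right_cancel₀ hu2 (by linear_combination h2)
    rw [hμ, one_mul] at h0
    exact hxu0 h0
  · push_neg at hprop
    by_cases hcyc1 : u 0 * v 1 = u 1 * v 2 ∧ u 1 * v 2 = u 2 * v 0
    · have hcyc2 : ¬ (v 0 * u 1 = v 1 * u 2 ∧ v 1 * u 2 = v 2 * u 0) := by
        rintro ⟨a, b⟩
        obtain ⟨e1, e2⟩ := hcyc1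
        have a' : u 1 * v 0 = u 2 * v 1 := by linear_combination a
        have b' : u 2 * v 1 = u 0 * v 2 := by linear_combination b
        have L : (u 0 * v 1) ^ 3 = (u 0 * v 1) * (u 1 * v 2) * (u 2 * v 0) := by
          rw [← e2, ← e1]; ring
        have R : (u 1 * v 0) ^ 3 = (u 1 * v 0) * (u 2 * v 1) * (u 0 * v 2) := by
          rw [← b', ← a']; ring
        have hts : (u 0 * v 1) ^ 3 = (u 1 * v 0) ^ 3 := by rw [L, R]; ring
        have q01 : u 0 * v 1 = u 1 * v 0 :=
          sc_cube_inj h3 (mul_ne_zero hu0 hv1) (mul_ne_zero hu1 hv0) hts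
        have q02 : u 0 * v 2 = u 2 * v 0 := by linear_combination e1 + e2 - a - b - q01
        obtain ⟨mm, hmm⟩ := sc_exists_smul hu0 q01 q02
        exact hprop mm hmm
      have hpropuv : ∀ m : F, u ≠ m • v := by
        intro m hm
        have hm0 : m ≠ 0 := by
          rintro rfl
          exact hu0 (by rw [hm]; exact zero_mul _)
        apply hprop m⁻¹
        rw [hm, smul_smul, inv_mul_cancel₀ hm0, one_smul]
      have := sc_caseA hv hu hpropuv hcyc2
      rwa [Set.inter_comm] at this
    · exact sc_caseA hu hv hprop hcyc1
end

section
/- Let q be a prime power with q ≥ 5 such that 3 does not divide q-1. Then there exist vectors u, v ∈ D_q with |Ẽ(u) ∩ Ẽ(v)| = 2(q-1); hence 2(q-1) is the largest t such that the family {Ẽ(u) : u ∈ D_q} is t-intersecting. -/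
open Set Pointwise

variable {F : Type*} [Field F]

set_option linter.unusedSectionVars false
set_option linter.unusedVariables false

def cross (e u : Fin 3 → F) : Prop :=
  e 0 * u 1 = e 1 * u 0 ∨ e 0 * u 2 = e 2 * u 0 ∨ e 1 * u 2 = e 2 * u 1

lemma two_le_ncard {S : Set (Fin 3)} {i j : Fin 3} (hij : i ≠ j) (hi : i ∈ S) (hj : j ∈ S) :
    2 ≤ S.ncard := by
  have h := Set.ncard_le_ncard (Set.insert_subset hi (Set.singleton_subset_iff.2 hj)) S.toFinite
  rwa [Set.ncard_pair hij] at h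

lemma ncard_le_one {S : Set (Fin 3)} {i : Fin 3} (h : S ⊆ {i}) : S.ncard ≤ 1 := by
  have := Set.ncard_le_ncard h (Set.finite_singleton i)
  rwa [Set.ncard_singleton] at this

lemma hdist_le_one_iff (u w : Fin 3 → F) :
    hdist u w ≤ 1 ↔
      (u 0 = w 0 ∧ u 1 = w 1) ∨ (u 0 = w 0 ∧ u 2 = w 2) ∨ (u 1 = w 1 ∧ u 2 = w 2) := by
  unfold hdist
  constructor
  · intro h
    by_contra hc
    push_neg at hc
    obtain ⟨h1, h2, h3⟩ := hc
    by_cases h0 : u 0 = w 0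
    · have hb : u 1 ≠ w 1 := fun hh => h1 h0 hh
      have hcc : u 2 ≠ w 2 := fun hh => h2 h0 hh
      have := two_le_ncard (show (1 : Fin 3) ≠ 2 by decide)
        (show (1 : Fin 3) ∈ {i : Fin 3 | u i ≠ w i} from hb)
        (show (2 : Fin 3) ∈ {i : Fin 3 | u i ≠ w i} from hcc)
      omega
    · by_cases hb : u 1 = w 1
      · have hcc : u 2 ≠ w 2 := fun hh => h3 hb hh
        have := two_le_ncard (show (0 : Fin 3) ≠ 2 by decide)
          (show (0 : Fin 3) ∈ {i : Fin 3 | u i ≠ w i} from h0)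
          (show (2 : Fin 3) ∈ {i : Fin 3 | u i ≠ w i} from hcc)
        omega
      · have := two_le_ncard (show (0 : Fin 3) ≠ 1 by decide)
          (show (0 : Fin 3) ∈ {i : Fin 3 | u i ≠ w i} from h0)
          (show (1 : Fin 3) ∈ {i : Fin 3 | u i ≠ w i} from hb)
        omega
  · rintro (⟨ha, hb⟩ | ⟨ha, hb⟩ | ⟨ha, hb⟩)
    · refine ncard_le_one (i := 2) ?_
      intro i hi
      simp only [Set.mem_setOf_eq] at hi
      fin_cases i
      · exact absurd ha hi
      · exact absurd hb hi
      · rfl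
    · refine ncard_le_one (i := 1) ?_
      intro i hi
      simp only [Set.mem_setOf_eq] at hi
      fin_cases i
      · exact absurd ha hi
      · rfl
      · exact absurd hb hi
    · refine ncard_le_one (i := 0) ?_
      intro i hi
      simp only [Set.mem_setOf_eq] at hi
      fin_cases i
      · rfl
      · exact absurd ha hi
      · exact absurd hb hi

lemma mem_extBall_iff_cross {u w : Fin 3 → F} (h0 : u 0 ≠ 0) (h1 : u 1 ≠ 0) (h2 : u 2 ≠ 0) :
    w ∈ extBall u ↔ cross w u := by
  unfold extBall ball cross
  simp only [Set.mem_iUnion, Set.mem_setOf_eq]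
  constructor
  · rintro ⟨l, hl⟩
    rw [hdist_le_one_iff] at hl
    rcases hl with ⟨ha, hb⟩ | ⟨ha, hb⟩ | ⟨ha, hb⟩ <;>
      simp only [Pi.smul_apply, smul_eq_mul] at ha hb
    · exact Or.inl (by rw [← ha, ← hb]; ring)
    · exact Or.inr (Or.inl (by rw [← ha, ← hb]; ring))
    · exact Or.inr (Or.inr (by rw [← ha, ← hb]; ring))
  · rintro (h | h | h)
    · refine ⟨w 0 / u 0, ?_⟩
      rw [hdist_le_one_iff]
      left
      constructor <;> simp only [Pi.smul_apply, smul_eq_mul] <;> field_simp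
      linear_combination h
    · refine ⟨w 0 / u 0, ?_⟩
      rw [hdist_le_one_iff]
      right; left
      constructor <;> simp only [Pi.smul_apply, smul_eq_mul] <;> field_simp
      linear_combination h
    · refine ⟨w 1 / u 1, ?_⟩
      rw [hdist_le_one_iff]
      right; right
      constructor <;> simp only [Pi.smul_apply, smul_eq_mul] <;> field_simp
      linear_combination h

def lineS (e : Fin 3 → F) : Set (Fin 3 → F) := {w | ∃ t : F, t ≠ 0 ∧ w = t • e}

lemma lineS_subset_Dq {e : Fin 3 → F} (he : e ∈ Dq) : lineS e ⊆ (Dq : Set (Fin 3 → F)) := by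
  rintro w ⟨t, ht, rfl⟩
  obtain ⟨h1, h2, h3, h4, h5, h6⟩ := he
  refine ⟨?_, ?_, ?_, ?_, ?_, ?_⟩ <;> simp only [Pi.smul_apply, smul_eq_mul]
  · exact fun h => h1 (mul_left_cancel₀ ht h)
  · exact fun h => h2 (mul_left_cancel₀ ht h)
  · exact fun h => h3 (mul_left_cancel₀ ht h)
  · exact mul_ne_zero ht h4
  · exact mul_ne_zero ht h5
  · exact mul_ne_zero ht h6

lemma cross_smul {e u : Fin 3 → F} (t : F) (h : cross e u) : cross (t • e) u := by
  rcases h with h | h | h <;>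
    [exact Or.inl (by simp only [Pi.smul_apply, smul_eq_mul]; linear_combination t * h);
     exact Or.inr (Or.inl (by simp only [Pi.smul_apply, smul_eq_mul]; linear_combination t * h));
     exact Or.inr (Or.inr (by simp only [Pi.smul_apply, smul_eq_mul]; linear_combination t * h))]

lemma ncard_lineS [Fintype F] {e : Fin 3 → F} (he : e 0 = 1) :
    (lineS e).ncard = Fintype.card F - 1 := by
  have himg : lineS e = (fun t : F => t • e) '' {t : F | t ≠ 0} := by
    ext w
    simp only [lineS, Set.mem_setOf_eq, Set.mem_image]
    constructor
    · rintro ⟨t, ht, rfl⟩; exact ⟨t, ht, rfl⟩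
    · rintro ⟨t, ht, rfl⟩; exact ⟨t, ht, rfl⟩
  have hinj : Function.Injective (fun t : F => t • e) := by
    intro t s h
    have := congrFun h 0
    simpa [he] using this
  rw [himg, Set.ncard_image_of_injective _ hinj]
  have : {t : F | t ≠ 0} = Set.univ \ {0} := by ext t; simp
  rw [this, Set.ncard_diff (Set.subset_univ _), Set.ncard_univ, Set.ncard_singleton,
    Nat.card_eq_fintype_card]

lemma disjoint_lineS {e e' : Fin 3 → F} (he : e 0 = 1) (he' : e' 0 = 1) (hne : e ≠ e') :
    Disjoint (lineS e) (lineS e') := by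
  rw [Set.disjoint_left]
  rintro w ⟨t, ht, rfl⟩ ⟨s, hs, heq⟩
  have h0 := congrFun heq 0
  simp only [Pi.smul_apply, smul_eq_mul, he, he', mul_one] at h0
  apply hne
  funext i
  have := congrFun heq i
  simp only [Pi.smul_apply, smul_eq_mul] at this
  rw [← h0] at this
  exact mul_left_cancel₀ ht this

lemma two_lines_le [Fintype F] {u v e e' : Fin 3 → F} (hu : u ∈ Dq) (hv : v ∈ Dq)
    (he : e ∈ Dq) (he' : e' ∈ Dq) (he0 : e 0 = 1) (he'0 : e' 0 = 1) (hne : e ≠ e')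
    (hcu : cross e u) (hcv : cross e v) (hcu' : cross e' u) (hcv' : cross e' v) :
    2 * (Fintype.card F - 1) ≤ (extBallD u ∩ extBallD v).ncard := by
  have hsub : lineS e ∪ lineS e' ⊆ extBallD u ∩ extBallD v := by
    rintro w (⟨t, ht, rfl⟩ | ⟨t, ht, rfl⟩)
    · exact ⟨⟨(mem_extBall_iff_cross hu.2.2.2.1 hu.2.2.2.2.1 hu.2.2.2.2.2).2 (cross_smul t hcu),
        lineS_subset_Dq he ⟨t, ht, rfl⟩⟩,
        ⟨(mem_extBall_iff_cross hv.2.2.2.1 hv.2.2.2.2.1 hv.2.2.2.2.2).2 (cross_smul t hcv),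
        lineS_subset_Dq he ⟨t, ht, rfl⟩⟩⟩
    · exact ⟨⟨(mem_extBall_iff_cross hu.2.2.2.1 hu.2.2.2.2.1 hu.2.2.2.2.2).2 (cross_smul t hcu'),
        lineS_subset_Dq he' ⟨t, ht, rfl⟩⟩,
        ⟨(mem_extBall_iff_cross hv.2.2.2.1 hv.2.2.2.2.1 hv.2.2.2.2.2).2 (cross_smul t hcv'),
        lineS_subset_Dq he' ⟨t, ht, rfl⟩⟩⟩
  have hcardU : (lineS e ∪ lineS e').ncard = 2 * (Fintype.card F - 1) := by
    rw [Set.ncard_union_eq (disjoint_lineS he0 he'0 hne) (Set.toFinite _) (Set.toFinite _),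
      ncard_lineS he0, ncard_lineS he'0]
    ring
  calc 2 * (Fintype.card F - 1) = (lineS e ∪ lineS e').ncard := hcardU.symm
    _ ≤ (extBallD u ∩ extBallD v).ncard := Set.ncard_le_ncard hsub (Set.toFinite _)

lemma cube_eq_one [Fintype F] [DecidableEq F] {q : ℕ} (hcard : Fintype.card F = q) (h3 : ¬ 3 ∣ q - 1)
    {x : F} (hx : x ^ 3 = 1) : x = 1 := by
  have hx0 : x ≠ 0 := by
    intro h; rw [h] at hx; simp at hx
  set xu : Fˣ := Units.mk0 x hx0 with hxu
  have hxu3 : xu ^ 3 = 1 := by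
    ext; push_cast [hxu]; exact hx
  have hdvd : orderOf xu ∣ 3 := orderOf_dvd_of_pow_eq_one hxu3
  have hdvd2 : orderOf xu ∣ q - 1 := by
    have := orderOf_dvd_card (x := xu)
    rwa [Fintype.card_units, hcard] at this
  rcases (Nat.prime_three.eq_one_or_self_of_dvd _ hdvd) with h | h
  · have : xu = 1 := orderOf_eq_one_iff.1 h
    have := congrArg (Units.val) this
    simpa [hxu] using this
  · rw [h] at hdvd2; exact absurd hdvd2 h3

lemma exists_two_avoiding [Fintype F] (hq5 : 5 ≤ Fintype.card F) (x y z : F) :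
    ∃ c1 c2 : F, c1 ≠ c2 ∧ c1 ≠ x ∧ c1 ≠ y ∧ c1 ≠ z ∧ c2 ≠ x ∧ c2 ≠ y ∧ c2 ≠ z := by
  classical
  set s : Finset F := {x, y, z} with hs
  have hcard : s.card ≤ 3 := by
    apply le_trans (Finset.card_insert_le _ _)
    apply Nat.succ_le_succ
    apply le_trans (Finset.card_insert_le _ _)
    simp
  have hcompl : 1 < sᶜ.card := by
    rw [Finset.card_compl]
    omega
  obtain ⟨c1, hc1, c2, hc2, hne⟩ := Finset.one_lt_card.1 hcompl
  simp only [hs, Finset.mem_compl, Finset.mem_insert, Finset.mem_singleton, not_or] at hc1 hc2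
  exact ⟨c1, c2, hne, hc1.1, hc1.2.1, hc1.2.2, hc2.1, hc2.2.1, hc2.2.2⟩

lemma exists_one_avoiding [Fintype F] (hq5 : 5 ≤ Fintype.card F) (x y z : F) :
    ∃ a : F, a ≠ x ∧ a ≠ y ∧ a ≠ z := by
  obtain ⟨c1, _, _, h⟩ := exists_two_avoiding hq5 x y z
  exact ⟨c1, h.1, h.2.1, h.2.2.1⟩

lemma mem_Dq_mk {x y : F} (h1 : x ≠ 0) (h2 : y ≠ 0) (h3 : x ≠ 1) (h4 : y ≠ 1) (h5 : x ≠ y) :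
    (![1, x, y] : Fin 3 → F) ∈ Dq := by
  refine ⟨?_, ?_, ?_, ?_, ?_, ?_⟩ <;> simp [Matrix.cons_val_zero, Matrix.cons_val_one,
    Matrix.head_cons] <;> first
  | exact fun h => h3 h.symm
  | exact fun h => h4 h.symm
  | exact h5
  | exact h1
  | exact h2

lemma cross_mk_01 {x y : F} {u : Fin 3 → F} (h : u 1 = x * u 0) : cross ![1, x, y] u :=
  Or.inl (by simpa using h)

lemma cross_mk_02 {x y : F} {u : Fin 3 → F} (h : u 2 = y * u 0) : cross ![1, x, y] u :=
  Or.inr (Or.inl (by simpa using h))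

lemma cross_mk_12 {x y : F} {u : Fin 3 → F} (h : x * u 2 = y * u 1) : cross ![1, x, y] u :=
  Or.inr (Or.inr (by simpa using h))

lemma vec_ne_one {x y x' y' : F} (h : x ≠ x') : (![1, x, y] : Fin 3 → F) ≠ ![1, x', y'] :=
  fun hh => h (by have := congrFun hh 1; simpa using this)

lemma vec_ne_two {x y x' y' : F} (h : y ≠ y') : (![1, x, y] : Fin 3 → F) ≠ ![1, x', y'] :=
  fun hh => h (by have := congrFun hh 2; simpa using this)

lemma lower_bound [Fintype F] {q : ℕ} (hq5 : 5 ≤ q) (hcard : Fintype.card F = q)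
    (h3 : ¬ 3 ∣ q - 1) {u v : Fin 3 → F} (hu : u ∈ Dq) (hv : v ∈ Dq) :
    2 * (q - 1) ≤ (extBallD u ∩ extBallD v).ncard := by
  classical
  have hF5 : 5 ≤ Fintype.card F := by rw [hcard]; exact hq5
  rw [← hcard]
  obtain ⟨hu01, hu02, hu12, hu0, hu1, hu2⟩ := id hu
  obtain ⟨hv01, hv02, hv12, hv0, hv1, hv2⟩ := id hv
  by_cases hs01 : u 0 * v 1 = u 1 * v 0
  · -- shared ratio on pair (0,1)
    set r := u 1 / u 0 with hrdef
    have hr : u 1 = r * u 0 := by rw [hrdef, div_mul_cancel₀ _ hu0]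
    have hr0 : r ≠ 0 := div_ne_zero hu1 hu0
    have hr1 : r ≠ 1 := fun h => hu01 (by rw [h, one_mul] at hr; exact hr.symm)
    have hrv : v 1 = r * v 0 := by
      rw [hrdef]; field_simp; linear_combination hs01
    obtain ⟨c1, c2, hcc, h10, h11, h1r, h20, h21, h2r⟩ := exists_two_avoiding hF5 0 1 r
    exact two_lines_le hu hv (mem_Dq_mk hr0 h10 hr1 h11 (fun h => h1r h.symm))
      (mem_Dq_mk hr0 h20 hr1 h21 (fun h => h2r h.symm)) rfl rfl (vec_ne_two hcc)
      (cross_mk_01 hr) (cross_mk_01 hrv) (cross_mk_01 hr) (cross_mk_01 hrv)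
  by_cases hs02 : u 0 * v 2 = u 2 * v 0
  · set r := u 2 / u 0 with hrdef
    have hr : u 2 = r * u 0 := by rw [hrdef, div_mul_cancel₀ _ hu0]
    have hr0 : r ≠ 0 := div_ne_zero hu2 hu0
    have hr1 : r ≠ 1 := fun h => hu02 (by rw [h, one_mul] at hr; exact hr.symm)
    have hrv : v 2 = r * v 0 := by
      rw [hrdef]; field_simp; linear_combination hs02
    obtain ⟨c1, c2, hcc, h10, h11, h1r, h20, h21, h2r⟩ := exists_two_avoiding hF5 0 1 r
    exact two_lines_le hu hv (mem_Dq_mk h10 hr0 h11 hr1 h1r)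
      (mem_Dq_mk h20 hr0 h21 hr1 h2r) rfl rfl (vec_ne_one hcc)
      (cross_mk_02 hr) (cross_mk_02 hrv) (cross_mk_02 hr) (cross_mk_02 hrv)
  by_cases hs12 : u 1 * v 2 = u 2 * v 1
  · set r := u 2 / u 1 with hrdef
    have hr : u 2 = r * u 1 := by rw [hrdef, div_mul_cancel₀ _ hu1]
    have hr0 : r ≠ 0 := div_ne_zero hu2 hu1
    have hr1 : r ≠ 1 := fun h => hu12 (by rw [h, one_mul] at hr; exact hr.symm)
    have hrv : v 2 = r * v 1 := by
      rw [hrdef]; field_simp; linear_combination hs12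
    obtain ⟨c1, c2, hcc, h10, h11, h1r, h20, h21, h2r⟩ := exists_two_avoiding hF5 0 1 r⁻¹
    have key : ∀ c : F, c ≠ 0 → c ≠ 1 → c ≠ r⁻¹ → (![1, c, c * r] : Fin 3 → F) ∈ Dq := by
      intro c hc0 hc1 hcr
      refine mem_Dq_mk hc0 (mul_ne_zero hc0 hr0) hc1 ?_ ?_
      · intro h
        exact hcr (eq_inv_of_mul_eq_one_left h)
      · intro h
        have : c * 1 = c * r := by rw [mul_one]; exact h
        exact hr1 (mul_left_cancel₀ hc0 this).symm
    have keyu : ∀ c : F, cross (![1, c, c * r] : Fin 3 → F) u :=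
      fun c => cross_mk_12 (by rw [hr]; ring)
    have keyv : ∀ c : F, cross (![1, c, c * r] : Fin 3 → F) v :=
      fun c => cross_mk_12 (by rw [hrv]; ring)
    exact two_lines_le hu hv (key c1 h10 h11 h1r) (key c2 h20 h21 h2r) rfl rfl
      (vec_ne_one hcc) (keyu c1) (keyv c1) (keyu c2) (keyv c2)
  -- Case B : no shared ratio
  obtain ⟨α, hα⟩ : ∃ a : F, u 1 = a * u 0 := ⟨u 1 / u 0, by field_simp⟩
  obtain ⟨β, hβ⟩ : ∃ a : F, u 2 = a * u 0 := ⟨u 2 / u 0, by field_simp⟩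
  obtain ⟨γ, hγ⟩ : ∃ a : F, v 1 = a * v 0 := ⟨v 1 / v 0, by field_simp⟩
  obtain ⟨δ, hδ⟩ : ∃ a : F, v 2 = a * v 0 := ⟨v 2 / v 0, by field_simp⟩
  have hα0 : α ≠ 0 := fun h => hu1 (by rw [hα, h, zero_mul])
  have hβ0 : β ≠ 0 := fun h => hu2 (by rw [hβ, h, zero_mul])
  have hγ0 : γ ≠ 0 := fun h => hv1 (by rw [hγ, h, zero_mul])
  have hδ0 : δ ≠ 0 := fun h => hv2 (by rw [hδ, h, zero_mul])
  have hα1 : α ≠ 1 := fun h => hu01 (by rw [h, one_mul] at hα; exact hα.symm)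
  have hβ1 : β ≠ 1 := fun h => hu02 (by rw [h, one_mul] at hβ; exact hβ.symm)
  have hγ1 : γ ≠ 1 := fun h => hv01 (by rw [h, one_mul] at hγ; exact hγ.symm)
  have hδ1 : δ ≠ 1 := fun h => hv02 (by rw [h, one_mul] at hδ; exact hδ.symm)
  have hαβ : α ≠ β := fun h => hu12 (by rw [hα, hβ, h])
  have hγδ : γ ≠ δ := fun h => hv12 (by rw [hγ, hδ, h])
  have hαγ : α ≠ γ := fun h => hs01 (by rw [hα, hγ, h]; ring)
  have hβδ : β ≠ δ := fun h => hs02 (by rw [hβ, hδ, h]; ring)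
  have hbg : α * δ ≠ β * γ := fun h =>
    hs12 (by rw [hα, hβ, hγ, hδ]; linear_combination (u 0 * v 0) * h)
  -- the six candidate lines
  have hP1u : cross (![1, α, δ] : Fin 3 → F) u := cross_mk_01 hα
  have hP1v : cross (![1, α, δ] : Fin 3 → F) v := cross_mk_02 hδ
  have hP2u : cross (![1, γ, β] : Fin 3 → F) u := cross_mk_02 hβ
  have hP2v : cross (![1, γ, β] : Fin 3 → F) v := cross_mk_01 hγ
  have hP3u : cross (![1, α, α * δ / γ] : Fin 3 → F) u := cross_mk_01 hα
  have hP3v : cross (![1, α, α * δ / γ] : Fin 3 → F) v :=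
    cross_mk_12 (by rw [hγ, hδ]; field_simp)
  have hP4u : cross (![1, γ, β * γ / α] : Fin 3 → F) u :=
    cross_mk_12 (by rw [hα, hβ]; field_simp)
  have hP4v : cross (![1, γ, β * γ / α] : Fin 3 → F) v := cross_mk_01 hγ
  have hP5u : cross (![1, β * γ / δ, β] : Fin 3 → F) u := cross_mk_02 hβ
  have hP5v : cross (![1, β * γ / δ, β] : Fin 3 → F) v :=
    cross_mk_12 (by rw [hγ, hδ]; field_simp)
  have hP6u : cross (![1, α * δ / β, δ] : Fin 3 → F) u :=
    cross_mk_12 (by rw [hα, hβ]; field_simp)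
  have hP6v : cross (![1, α * δ / β, δ] : Fin 3 → F) v := cross_mk_02 hδ
  have hP1D : α ≠ δ → (![1, α, δ] : Fin 3 → F) ∈ Dq := fun h => mem_Dq_mk hα0 hδ0 hα1 hδ1 h
  have hP2D : γ ≠ β → (![1, γ, β] : Fin 3 → F) ∈ Dq := fun h => mem_Dq_mk hγ0 hβ0 hγ1 hβ1 h
  have hP3D : γ ≠ α * δ → (![1, α, α * δ / γ] : Fin 3 → F) ∈ Dq := by
    intro h
    refine mem_Dq_mk hα0 (div_ne_zero (mul_ne_zero hα0 hδ0) hγ0) hα1 ?_ ?_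
    · intro hh; rw [div_eq_iff hγ0, one_mul] at hh; exact h hh.symm
    · intro hh; rw [eq_div_iff hγ0] at hh; exact hγδ (mul_left_cancel₀ hα0 (by linear_combination hh))
  have hP4D : α ≠ β * γ → (![1, γ, β * γ / α] : Fin 3 → F) ∈ Dq := by
    intro h
    refine mem_Dq_mk hγ0 (div_ne_zero (mul_ne_zero hβ0 hγ0) hα0) hγ1 ?_ ?_
    · intro hh; rw [div_eq_iff hα0, one_mul] at hh; exact h hh.symm
    · intro hh; rw [eq_div_iff hα0] at hh
      exact hαβ (mul_left_cancel₀ hγ0 (by linear_combination hh))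
  have hP5D : δ ≠ β * γ → (![1, β * γ / δ, β] : Fin 3 → F) ∈ Dq := by
    intro h
    refine mem_Dq_mk (div_ne_zero (mul_ne_zero hβ0 hγ0) hδ0) hβ0 ?_ hβ1 ?_
    · intro hh; rw [div_eq_iff hδ0, one_mul] at hh; exact h hh.symm
    · intro hh; rw [div_eq_iff hδ0] at hh
      exact hγδ (mul_left_cancel₀ hβ0 (by linear_combination hh))
  have hP6D : β ≠ α * δ → (![1, α * δ / β, δ] : Fin 3 → F) ∈ Dq := by
    intro h
    refine mem_Dq_mk (div_ne_zero (mul_ne_zero hα0 hδ0) hβ0) hδ0 ?_ hδ1 ?_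
    · intro hh; rw [div_eq_iff hβ0, one_mul] at hh; exact h hh.symm
    · intro hh; rw [div_eq_iff hβ0] at hh
      exact hαβ (mul_left_cancel₀ hδ0 (by linear_combination hh))
  by_cases hB4 : β * γ = α
  · by_cases hB5 : δ = β * γ
    · have hB1 : α = δ := (hB5.trans hB4).symm
      by_cases hB3 : γ = α * δ
      · -- leaf (P2, P6)
        have hh1 : γ = α * α := by rw [hB3, ← hB1]
        have hB2' : γ ≠ β := by
          intro h
          have hh2 : β = α * α := by rw [← h]; exact hh1
          have h4 : α * α ^ 3 = α * 1 := by linear_combination hB4 - γ * hh2 - (α*α) * hh1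
          exact hα1 (cube_eq_one hcard h3 (mul_left_cancel₀ hα0 h4))
        have hB6' : β ≠ α * δ := by
          intro h
          have hh2 : β = α * α := by rw [h, ← hB1]
          have h4 : α * α ^ 3 = α * 1 := by linear_combination hB4 - γ * hh2 - (α*α) * hh1
          exact hα1 (cube_eq_one hcard h3 (mul_left_cancel₀ hα0 h4))
        refine two_lines_le hu hv (hP2D hB2') (hP6D hB6') rfl rfl ?_ hP2u hP2v hP6u hP6v
        refine vec_ne_one ?_
        intro h; rw [eq_div_iff hβ0] at h; exact hbg (by linear_combination -h)
      · by_cases hB2 : γ = β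
        · -- leaf (P3, P6)
          have hB6' : β ≠ α * δ := fun h => hB3 (hB2.trans h)
          refine two_lines_le hu hv (hP3D hB3) (hP6D hB6') rfl rfl ?_ hP3u hP3v hP6u hP6v
          refine vec_ne_one ?_
          intro h; rw [eq_div_iff hβ0] at h
          exact hβδ (mul_left_cancel₀ hα0 (by linear_combination h))
        · -- leaf (P2, P3)
          refine two_lines_le hu hv (hP2D hB2) (hP3D hB3) rfl rfl ?_ hP2u hP2v hP3u hP3v
          exact vec_ne_one (fun h => hαγ h.symm)
    · by_cases hB1 : α = δ
      · by_cases hB2 : γ = β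
        · by_cases hB3 : γ = α * δ
          · exfalso
            have hh1 : γ = α * α := by rw [hB3, ← hB1]
            have hh2 : β = α * α := by rw [← hB2]; exact hh1
            have h4 : α * α ^ 3 = α * 1 := by linear_combination hB4 - γ * hh2 - (α*α) * hh1
            exact hα1 (cube_eq_one hcard h3 (mul_left_cancel₀ hα0 h4))
          · -- leaf (P3, P5)
            refine two_lines_le hu hv (hP3D hB3) (hP5D (fun h => hB5 h)) rfl rfl ?_
              hP3u hP3v hP5u hP5v
            refine vec_ne_one ?_
            intro h; rw [eq_div_iff hδ0] at h; exact hbg h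
        · -- leaf (P2, P5)
          refine two_lines_le hu hv (hP2D hB2) (hP5D (fun h => hB5 h)) rfl rfl ?_
            hP2u hP2v hP5u hP5v
          refine vec_ne_one ?_
          intro h; rw [eq_div_iff hδ0] at h
          exact hβδ (mul_left_cancel₀ hγ0 (by linear_combination h)).symm
      · -- leaf (P1, P5)
        refine two_lines_le hu hv (hP1D hB1) (hP5D (fun h => hB5 h)) rfl rfl ?_
          hP1u hP1v hP5u hP5v
        exact vec_ne_two (fun h => hβδ h.symm)
  · by_cases hB5 : δ = β * γ
    · by_cases hB2 : γ = β
      · by_cases hB1 : α = δ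
        · by_cases hB6 : β = α * δ
          · exfalso
            have hh1 : β = α * α := by rw [hB6, ← hB1]
            have hh2 : γ = α * α := by rw [hB2]; exact hh1
            have h4 : α * α ^ 3 = α * 1 := by
              linear_combination -hB1 - hB5 - γ * hh1 - (α*α) * hh2
            exact hα1 (cube_eq_one hcard h3 (mul_left_cancel₀ hα0 h4))
          · -- leaf (P6, P4)
            refine two_lines_le hu hv (hP6D hB6) (hP4D (fun h => hB4 h.symm)) rfl rfl ?_
              hP6u hP6v hP4u hP4v
            refine vec_ne_one ?_
            intro h; rw [div_eq_iff hβ0] at h; exact hbg (by linear_combination h)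
        · -- leaf (P1, P4)
          refine two_lines_le hu hv (hP1D hB1) (hP4D (fun h => hB4 h.symm)) rfl rfl ?_
            hP1u hP1v hP4u hP4v
          exact vec_ne_one hαγ
      · -- leaf (P2, P4)
        refine two_lines_le hu hv (hP2D hB2) (hP4D (fun h => hB4 h.symm)) rfl rfl ?_
          hP2u hP2v hP4u hP4v
        refine vec_ne_two ?_
        intro h; rw [eq_div_iff hα0] at h
        exact hαγ (mul_left_cancel₀ hβ0 (by linear_combination h))
    · -- leaf (P4, P5)
      refine two_lines_le hu hv (hP4D (fun h => hB4 h.symm)) (hP5D (fun h => hB5 h)) rfl rfl ?_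
        hP4u hP4v hP5u hP5v
      refine vec_ne_two ?_
      intro h; rw [div_eq_iff hα0] at h
      exact hαγ (mul_left_cancel₀ hβ0 (by linear_combination h)).symm

lemma self_mem_extBall (u : Fin 3 → F) : u ∈ extBall u := by
  refine Set.mem_iUnion.2 ⟨1, ?_⟩
  show hdist (1 • u) u ≤ 1
  rw [one_smul]
  unfold hdist
  have : {i : Fin 3 | u i ≠ u i} = ∅ := by simp
  rw [this, Set.ncard_empty]
  omega

lemma lineS_subset_inter {u v e : Fin 3 → F} (hu : u ∈ Dq) (hv : v ∈ Dq) (he : e ∈ Dq)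
    (hcu : cross e u) (hcv : cross e v) : lineS e ⊆ extBallD u ∩ extBallD v := by
  rintro w ⟨t, ht, rfl⟩
  exact ⟨⟨(mem_extBall_iff_cross hu.2.2.2.1 hu.2.2.2.2.1 hu.2.2.2.2.2).2 (cross_smul t hcu),
    lineS_subset_Dq he ⟨t, ht, rfl⟩⟩,
    ⟨(mem_extBall_iff_cross hv.2.2.2.1 hv.2.2.2.2.1 hv.2.2.2.2.2).2 (cross_smul t hcv),
    lineS_subset_Dq he ⟨t, ht, rfl⟩⟩⟩

lemma eq_smul_vec {w : Fin 3 → F} {t x y : F} (h0 : w 0 = t) (h1 : w 1 = t * x)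
    (h2 : w 2 = t * y) : w = t • ![1, x, y] := by
  funext i
  fin_cases i
  · simpa using h0
  · simpa using h1
  · simpa using h2


lemma exact_pair [Fintype F] {q : ℕ} (hq5 : 5 ≤ q) (hcard : Fintype.card F = q)
    (h3 : ¬ 3 ∣ q - 1) :
    ∃ u ∈ (Dq : Set (Fin 3 → F)), ∃ v ∈ (Dq : Set (Fin 3 → F)),
      extBallD u ≠ extBallD v ∧ (extBallD u ∩ extBallD v).ncard = 2 * (q - 1) := by
  classical
  have hF5 : 5 ≤ Fintype.card F := by rw [hcard]; exact hq5
  obtain ⟨a, b, hab, ha0, ha1, han1, _, _, _⟩ := exists_two_avoiding hF5 0 1 (-1)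
  have ha2 : a ^ 2 ≠ 1 := by
    intro h
    have h' : (a - 1) * (a + 1) = 0 := by linear_combination h
    rcases mul_eq_zero.1 h' with h'' | h''
    · exact ha1 (by linear_combination h'')
    · exact han1 (by linear_combination h'')
  have ha3 : a ^ 3 ≠ 1 := fun h => ha1 (cube_eq_one hcard h3 h)
  have haa1 : a * a ≠ 1 := fun h => ha2 (by linear_combination h)
  have haa : a ≠ a ^ 2 := fun h => ha1 (mul_left_cancel₀ ha0 (by linear_combination h)).symm
  have ha23 : a ^ 2 ≠ a ^ 3 := fun h =>
    ha1 (mul_left_cancel₀ (pow_ne_zero 2 ha0) (by linear_combination h)).symm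
  set u : Fin 3 → F := ![1, a, a ^ 2] with hudef
  set v : Fin 3 → F := ![1, a ^ 2, a] with hvdef
  set e : Fin 3 → F := ![1, a ^ 2, a ^ 3] with hedef
  set e' : Fin 3 → F := ![1, a ^ 3, a ^ 2] with he'def
  have hu : u ∈ Dq := mem_Dq_mk ha0 (pow_ne_zero 2 ha0) ha1 ha2 haa
  have hv : v ∈ Dq := mem_Dq_mk (pow_ne_zero 2 ha0) ha0 ha2 ha1 (fun h => haa h.symm)
  have he : e ∈ Dq := mem_Dq_mk (pow_ne_zero 2 ha0) (pow_ne_zero 3 ha0) ha2 ha3 ha23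
  have he' : e' ∈ Dq := mem_Dq_mk (pow_ne_zero 3 ha0) (pow_ne_zero 2 ha0) ha3 ha2
    (fun h => ha23 h.symm)
  have hne : e ≠ e' := vec_ne_one ha23
  have hcu : cross e u := cross_mk_12 (by rw [hudef]; simp; ring)
  have hcv : cross e v := cross_mk_01 (by rw [hvdef]; simp)
  have hcu' : cross e' u := cross_mk_02 (by rw [hudef]; simp)
  have hcv' : cross e' v := cross_mk_12 (by rw [hvdef]; simp; ring)
  have hset : extBallD u ∩ extBallD v = lineS e ∪ lineS e' := by
    apply Set.Subset.antisymm
    · rintro w ⟨⟨hwEu, hwD⟩, hwEv, -⟩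
      obtain ⟨hw01, hw02, hw12, hw0, hw1, hw2⟩ := hwD
      have hcru : cross w u := (mem_extBall_iff_cross hu.2.2.2.1 hu.2.2.2.2.1 hu.2.2.2.2.2).1 hwEu
      have hcrv : cross w v := (mem_extBall_iff_cross hv.2.2.2.1 hv.2.2.2.2.1 hv.2.2.2.2.2).1 hwEv
      rw [hudef] at hcru
      rw [hvdef] at hcrv
      unfold cross at hcru hcrv
      simp only [Matrix.cons_val_zero, Matrix.cons_val_one, Matrix.head_cons,
        Matrix.cons_val_two, Matrix.tail_cons, mul_one, one_mul] at hcru hcrv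
      rcases hcru with h1 | h1 | h1 <;> rcases hcrv with h2 | h2 | h2
      · -- w0a = w1 ; w0a² = w1
        exfalso
        have e1 : a = a * a := mul_left_cancel₀ hw0 (by linear_combination h1 - h2)
        exact ha1 (mul_left_cancel₀ ha0 (by linear_combination e1)).symm
      · -- w0a = w1 ; w0a = w2
        exact absurd (by linear_combination h2 - h1 : w 1 = w 2) hw12
      · -- w0a = w1 ; w1a = w2a²
        exfalso
        have e1 : w 0 * (a * a) = w 2 * (a * a) := by linear_combination a * h1 + h2
        exact hw02 (mul_right_cancel₀ (mul_ne_zero ha0 ha0) e1)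
      · -- w0a² = w2 ; w0a² = w1
        exact absurd (by linear_combination h1 - h2 : w 1 = w 2) hw12
      · -- w0a² = w2 ; w0a = w2
        exfalso
        have e1 : a * a = a * 1 := mul_left_cancel₀ hw0 (by linear_combination h1 - h2)
        exact ha1 (mul_left_cancel₀ ha0 e1)
      · -- w0a² = w2 ; w1a = w2a²  → w = w0 • e'
        right
        exact ⟨w 0, hw0, eq_smul_vec rfl
          (mul_right_cancel₀ ha0 (by linear_combination h2 - a ^ 2 * h1))
          (by linear_combination -h1)⟩
      · -- w1a² = w2a ; w0a² = w1  → w = w0 • e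
        left
        exact ⟨w 0, hw0, eq_smul_vec rfl
          (by linear_combination -h2)
          (mul_right_cancel₀ ha0 (by linear_combination -h1 - a ^ 2 * h2))⟩
      · -- w1a² = w2a ; w0a = w2
        exfalso
        have e1 : w 1 * (a * a) = w 0 * (a * a) := by linear_combination h1 - a * h2
        exact hw01 (mul_right_cancel₀ (mul_ne_zero ha0 ha0) e1).symm
      · -- w1a² = w2a ; w1a = w2a²
        exfalso
        have e1 : w 2 * (a * 1) = w 2 * (a * (a * a)) := by linear_combination a * h2 - h1
        have e2 : 1 = a * a := mul_left_cancel₀ ha0 (mul_left_cancel₀ hw2 e1)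
        exact haa1 e2.symm
    · exact Set.union_subset (lineS_subset_inter hu hv he hcu hcv)
        (lineS_subset_inter hu hv he' hcu' hcv')
  have hnum : (extBallD u ∩ extBallD v).ncard = 2 * (q - 1) := by
    rw [hset, Set.ncard_union_eq (disjoint_lineS rfl rfl hne) (Set.toFinite _) (Set.toFinite _),
      ncard_lineS (by rw [hedef]; simp), ncard_lineS (by rw [he'def]; simp), hcard]
    omega
  refine ⟨u, hu, v, hv, ?_, hnum⟩
  intro hEq
  have hvmem : v ∈ extBallD v := ⟨self_mem_extBall v, hv⟩
  rw [← hEq] at hvmem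
  have hcrvu : cross v u := (mem_extBall_iff_cross hu.2.2.2.1 hu.2.2.2.2.1 hu.2.2.2.2.2).1 hvmem.1
  rw [hudef, hvdef] at hcrvu
  unfold cross at hcrvu
  simp only [Matrix.cons_val_zero, Matrix.cons_val_one, Matrix.head_cons,
    Matrix.cons_val_two, Matrix.tail_cons, mul_one, one_mul] at hcrvu
  rcases hcrvu with h | h | h
  · exact haa (by linear_combination h)
  · exact haa (by linear_combination -h)
  · exact haa1 (mul_left_cancel₀ (mul_ne_zero ha0 ha0) (by linear_combination -h)).symm

theorem stmt_1 (q : ℕ) (hq : IsPrimePow q) (hq5 : 5 ≤ q) (F : Type*) [Field F] [Fintype F]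
    (hcard : Fintype.card F = q) (h3 : ¬ (3 ∣ q - 1)) :
    (∃ u ∈ (Dq : Set (Fin 3 → F)), ∃ v ∈ (Dq : Set (Fin 3 → F)),
        (extBallD u ∩ extBallD v).ncard = 2 * (q - 1)) ∧
    IsGreatest {t : ℕ | ∀ u ∈ (Dq : Set (Fin 3 → F)), ∀ v ∈ (Dq : Set (Fin 3 → F)),
        extBallD u ≠ extBallD v → t ≤ (extBallD u ∩ extBallD v).ncard} (2 * (q - 1)) := by
  classical
  obtain ⟨u₀, hu₀, v₀, hv₀, hne₀, hnum₀⟩ := exact_pair (F := F) hq5 hcard h3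
  refine ⟨⟨u₀, hu₀, v₀, hv₀, hnum₀⟩, ?_, ?_⟩
  · intro u hu v hv _
    exact lower_bound hq5 hcard h3 hu hv
  · intro t ht
    have h := ht u₀ hu₀ v₀ hv₀ hne₀
    rwa [hnum₀] at h
end

section
/- Let q be a prime power and u ∈ 𝔽_q³. If either (i) u has exactly one nonzero coordinate, or (ii) u has exactly two nonzero coordinates and these two nonzero coordinates are equal, or (iii) all three coordinates of u are equal and nonzero, then Ẽ(u) = ∅. -/
open Set Pointwise

variable {F : Type*} [Field F]

theorem stmt_4 (q : ℕ) (hq : IsPrimePow q) (F : Type*) [Field F] [Fintype F]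
    (hcard : Fintype.card F = q) (u : Fin 3 → F)
    (h : ({i : Fin 3 | u i ≠ 0}).ncard = 1 ∨
         (({i : Fin 3 | u i ≠ 0}).ncard = 2 ∧
           ∀ i j : Fin 3, u i ≠ 0 → u j ≠ 0 → u i = u j) ∨
         (u 0 = u 1 ∧ u 1 = u 2 ∧ u 0 ≠ 0)) :
    extBallD u = ∅ := by
  have key : ∀ i j : Fin 3, i ≠ j → u i = u j ∨ u i = 0 ∨ u j = 0 := by
    intro i j hij
    rcases h with h1 | ⟨h2, h2'⟩ | ⟨h30, h31, h32⟩
    · rcases Set.ncard_eq_one.mp h1 with ⟨a, ha⟩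
      by_contra hc
      push_neg at hc
      obtain ⟨-, hi, hj⟩ := hc
      have hia : i ∈ ({a} : Set (Fin 3)) := ha ▸ hi
      have hja : j ∈ ({a} : Set (Fin 3)) := ha ▸ hj
      simp only [Set.mem_singleton_iff] at hia hja
      exact hij (hia.trans hja.symm)
    · by_cases hi : u i = 0
      · exact Or.inr (Or.inl hi)
      · by_cases hj : u j = 0
        · exact Or.inr (Or.inr hj)
        · exact Or.inl (h2' i j hi hj)
    · left
      fin_cases i <;> fin_cases j <;> simp_all
  ext v
  simp only [extBallD, extBall, Set.mem_inter_iff, Set.mem_iUnion,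
    Set.mem_empty_iff_false, iff_false, not_and]
  rintro ⟨l, hv⟩ hDq
  obtain ⟨d01, d02, d12, n0, n1, n2⟩ := hDq
  have hvne : ∀ i j : Fin 3, i ≠ j → v i ≠ v j := by
    intro i j hij
    fin_cases i <;> fin_cases j <;> simp_all <;> exact fun e => (by simp_all)
  have hvnz : ∀ i : Fin 3, v i ≠ 0 := by
    intro i; fin_cases i <;> assumption
  have hD1 : ({i : Fin 3 | (l • u) i ≠ v i}).ncard ≤ 1 := hv
  set D := {i : Fin 3 | (l • u) i ≠ v i} with hDdef
  have two : ∀ i j : Fin 3, i ≠ j → i ∈ D → j ∈ D → False := by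
    intro i j hij hi hj
    have hsub : ({i, j} : Set (Fin 3)) ⊆ D := by
      rintro x hx
      rcases hx with rfl | hx
      · exact hi
      · rw [Set.mem_singleton_iff] at hx; subst hx; exact hj
    have hle := Set.ncard_le_ncard hsub (Set.toFinite D)
    rw [Set.ncard_pair hij] at hle
    omega
  obtain ⟨i, j, hij, hi, hj⟩ : ∃ i j : Fin 3, i ≠ j ∧ i ∉ D ∧ j ∉ D := by
    by_cases h0 : (0 : Fin 3) ∈ D
    · exact ⟨1, 2, by decide, fun hh => two 0 1 (by decide) h0 hh,
        fun hh => two 0 2 (by decide) h0 hh⟩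
    · by_cases h1 : (1 : Fin 3) ∈ D
      · exact ⟨0, 2, by decide, h0, fun hh => two 1 2 (by decide) h1 hh⟩
      · exact ⟨0, 1, by decide, h0, h1⟩
  simp only [hDdef, Set.mem_setOf_eq, not_not, Pi.smul_apply, smul_eq_mul] at hi hj
  rcases key i j hij with heq | hz | hz
  · exact hvne i j hij (by rw [← hi, ← hj, heq])
  · exact hvnz i (by rw [← hi, hz, mul_zero])
  · exact hvnz j (by rw [← hj, hz, mul_zero])
end

section
/- Let q be a prime power and u ∈ 𝔽_q³ a vector with exactly two nonzero coordinates, and suppose these two nonzero coordinates are distinct. Then |Ẽ(u)| = (q-1)(q-3). -/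
open Set Pointwise

variable {F : Type*} [Field F]

lemma fin3_cover : ∀ (i j k m : Fin 3), i ≠ j → i ≠ k → j ≠ k → m = i ∨ m = j ∨ m = k := by
  decide

lemma mem_Dq_iff (v : Fin 3 → F) :
    v ∈ Dq ↔ (∀ m, v m ≠ 0) ∧ ∀ m n : Fin 3, m ≠ n → v m ≠ v n := by
  unfold Dq
  constructor
  · rintro ⟨a, b, c, d, e, f⟩
    refine ⟨fun m => ?_, fun m n hmn => ?_⟩
    · fin_cases m <;> assumption
    · fin_cases m <;> fin_cases n <;> simp_all <;> tauto
  · rintro ⟨h1, h2⟩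
    exact ⟨h2 0 1 (by decide), h2 0 2 (by decide), h2 1 2 (by decide), h1 0, h1 1, h1 2⟩

lemma key (q : ℕ) (F : Type*) [Field F] [Fintype F] (hcard : Fintype.card F = q)
    (u : Fin 3 → F) (i j k : Fin 3) (hij : i ≠ j) (hik : i ≠ k) (hjk : j ≠ k)
    (hi : u i ≠ 0) (hj : u j ≠ 0) (hk : u k = 0) (huij : u i ≠ u j) :
    (extBallD u).ncard = (q - 1) * (q - 3) := by
  classical
  set S : Set (F × F) := {p | p.1 ≠ 0 ∧ p.2 ≠ 0 ∧ p.2 ≠ p.1 * u i ∧ p.2 ≠ p.1 * u j} with hS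
  set e : F × F → (Fin 3 → F) :=
    fun p m => if m = i then p.1 * u i else if m = j then p.1 * u j else p.2 with he
  have hei : ∀ p : F × F, e p i = p.1 * u i := fun p => by simp [he]
  have hej : ∀ p : F × F, e p j = p.1 * u j := fun p => by simp [he, hij.symm]
  have hek : ∀ p : F × F, e p k = p.2 := fun p => by simp [he, hik.symm, hjk.symm]
  -- Step A : extBallD u = e '' S
  have hA : extBallD u = e '' S := by
    ext v
    constructor
    · rintro ⟨hv1, hv2⟩
      obtain ⟨hv0, hvd⟩ := (mem_Dq_iff v).mp hv2
      obtain ⟨l, hl⟩ := Set.mem_iUnion.mp hv1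
      have hl1 : Set.ncard {m : Fin 3 | (l • u) m ≠ v m} ≤ 1 := hl
      have hkmem : k ∈ {m : Fin 3 | (l • u) m ≠ v m} := by
        simp only [Set.mem_setOf_eq, Pi.smul_apply, smul_eq_mul, hk, mul_zero]
        exact (hv0 k).symm
      have hnotmem : ∀ m : Fin 3, m ≠ k → v m = (l • u) m := by
        intro m hm
        by_contra hcon
        have hsub : {m, k} ⊆ {m : Fin 3 | (l • u) m ≠ v m} := by
          intro x hx
          rcases hx with rfl | hx
          · exact fun h => hcon h.symm
          · simp only [Set.mem_singleton_iff] at hx; subst hx; exact hkmem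
        have := Set.ncard_le_ncard hsub (Set.toFinite _)
        rw [Set.ncard_pair hm] at this
        omega
      have hvi : v i = l * u i := by
        have := hnotmem i hik
        simpa using this
      have hvj : v j = l * u j := by
        have := hnotmem j hjk
        simpa using this
      have hlne : l ≠ 0 := by
        intro h; apply hv0 i; rw [hvi, h, zero_mul]
      refine ⟨(l, v k), ⟨hlne, hv0 k, ?_, ?_⟩, ?_⟩
      · rw [← hvi]; exact hvd k i (Ne.symm hik)
      · rw [← hvj]; exact hvd k j (Ne.symm hjk)
      · funext m
        rcases fin3_cover i j k m hij hik hjk with rfl | rfl | rfl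
        · rw [hei]; exact hvi.symm
        · rw [hej]; exact hvj.symm
        · rw [hek]
    · rintro ⟨⟨l, c⟩, ⟨hl, hc, hci, hcj⟩, rfl⟩
      constructor
      · apply Set.mem_iUnion.mpr ⟨l, ?_⟩
        show Set.ncard {m : Fin 3 | (l • u) m ≠ e (l, c) m} ≤ 1
        have hsub : {m : Fin 3 | (l • u) m ≠ e (l, c) m} ⊆ {k} := by
          intro m hm
          simp only [Set.mem_setOf_eq, Pi.smul_apply, smul_eq_mul] at hm
          rcases fin3_cover i j k m hij hik hjk with h | h | h
          · rw [h] at hm; exact absurd (hei (l, c)).symm hm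
          · rw [h] at hm; exact absurd (hej (l, c)).symm hm
          · exact h
        calc Set.ncard _ ≤ Set.ncard ({k} : Set (Fin 3)) :=
              Set.ncard_le_ncard hsub (Set.toFinite _)
          _ = 1 := Set.ncard_singleton k
      · rw [mem_Dq_iff]
        constructor
        · intro m
          rcases fin3_cover i j k m hij hik hjk with h | h | h <;> rw [h]
          · rw [hei]; exact mul_ne_zero hl hi
          · rw [hej]; exact mul_ne_zero hl hj
          · rw [hek]; exact hc
        · intro m n hmn
          have hij' : l * u i ≠ l * u j := fun h => huij (mul_left_cancel₀ hl h)
          rcases fin3_cover i j k m hij hik hjk with h | h | h <;>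
            rcases fin3_cover i j k n hij hik hjk with h' | h' | h' <;>
            rw [h, h'] at hmn ⊢ <;>
            first
              | exact absurd rfl hmn
              | (rw [hei (l, c), hej (l, c)]; exact hij')
              | (rw [hej (l, c), hei (l, c)]; exact hij'.symm)
              | (rw [hei (l, c), hek (l, c)]; exact hci.symm)
              | (rw [hek (l, c), hei (l, c)]; exact hci)
              | (rw [hej (l, c), hek (l, c)]; exact hcj.symm)
              | (rw [hek (l, c), hej (l, c)]; exact hcj)
  -- Step B : injectivity
  have hB : Set.InjOn e S := by
    rintro ⟨l, c⟩ ⟨hl, -, -, -⟩ ⟨l', c'⟩ ⟨hl', -, -, -⟩ hpe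
    have h1 : l * u i = l' * u i := by
      have := congrFun hpe i; rwa [hei, hei] at this
    have h2 : c = c' := by
      have := congrFun hpe k; rwa [hek, hek] at this
    have : l = l' := mul_right_cancel₀ hi h1
    simp [this, h2]
  -- Step C : counting
  have hC : S.ncard = (q - 1) * (q - 3) := by
    have h3 : ∀ l : F, l ≠ 0 →
        ({0, l * u i, l * u j} : Finset F).card = 3 := by
      intro l hl
      rw [Finset.card_insert_of_notMem, Finset.card_insert_of_notMem, Finset.card_singleton]
      · simp only [Finset.mem_singleton]
        exact fun h => huij (mul_left_cancel₀ hl h)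
      · simp only [Finset.mem_insert, Finset.mem_singleton]
        push_neg
        exact ⟨(mul_ne_zero hl hi).symm, (mul_ne_zero hl hj).symm⟩
    have hT : S.toFinset =
        (Finset.univ \ {0}).biUnion
          (fun l => ({l} : Finset F) ×ˢ (Finset.univ \ {0, l * u i, l * u j})) := by
      ext ⟨l, c⟩
      simp only [Set.mem_toFinset, hS, Set.mem_setOf_eq, Finset.mem_biUnion, Finset.mem_sdiff,
        Finset.mem_univ, true_and, Finset.mem_product, Finset.mem_singleton, Finset.mem_insert]
      constructor
      · rintro ⟨h1, h2, h3, h4⟩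
        exact ⟨l, h1, rfl, by push_neg; exact ⟨h2, h3, h4⟩⟩
      · rintro ⟨l', h1, rfl, h2⟩
        push_neg at h2
        exact ⟨h1, h2.1, h2.2.1, h2.2.2⟩
    rw [Set.ncard_eq_toFinset_card', hT, Finset.card_biUnion]
    · have : ∀ l ∈ Finset.univ \ ({0} : Finset F),
          (({l} : Finset F) ×ˢ (Finset.univ \ {0, l * u i, l * u j})).card = q - 3 := by
        intro l hl
        simp only [Finset.mem_sdiff, Finset.mem_singleton] at hl
        rw [Finset.card_product, Finset.card_singleton, one_mul,
          Finset.card_sdiff_of_subset (Finset.subset_univ _), Finset.card_univ, hcard, h3 l hl.2]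
      rw [Finset.sum_congr rfl this, Finset.sum_const,
        Finset.card_sdiff_of_subset (Finset.subset_univ _), Finset.card_univ, hcard,
        Finset.card_singleton, smul_eq_mul]
    · intro x hx y hy hxy
      rw [Function.onFun, Finset.disjoint_left]
      rintro ⟨a, b⟩ ha hb
      simp only [Finset.mem_product, Finset.mem_singleton] at ha hb
      exact hxy (ha.1 ▸ hb.1 ▸ rfl)
  rw [hA, Set.ncard_image_of_injOn hB, hC]

theorem stmt_5 (q : ℕ) (hq : IsPrimePow q) (F : Type*) [Field F] [Fintype F]
    (hcard : Fintype.card F = q) (u : Fin 3 → F)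
    (h2 : ({i : Fin 3 | u i ≠ 0}).ncard = 2)
    (hd : ∀ i j : Fin 3, i ≠ j → u i ≠ 0 → u j ≠ 0 → u i ≠ u j) :
    (extBallD u).ncard = (q - 1) * (q - 3) := by
  by_cases h0 : u 0 = 0 <;> by_cases h1 : u 1 = 0 <;> by_cases h2' : u 2 = 0
  · have : {i : Fin 3 | u i ≠ 0} = (∅ : Set (Fin 3)) := by
      ext m; fin_cases m <;> simp [h0, h1, h2']
    rw [this, Set.ncard_empty] at h2; omega
  · have : {i : Fin 3 | u i ≠ 0} = ({2} : Set (Fin 3)) := by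
      ext m; fin_cases m <;> simp [h0, h1, h2']
    rw [this, Set.ncard_singleton] at h2; omega
  · have : {i : Fin 3 | u i ≠ 0} = ({1} : Set (Fin 3)) := by
      ext m; fin_cases m <;> simp [h0, h1, h2']
    rw [this, Set.ncard_singleton] at h2; omega
  · exact key q F hcard u 1 2 0 (by decide) (by decide) (by decide) h1 h2' h0
      (hd 1 2 (by decide) h1 h2')
  · have : {i : Fin 3 | u i ≠ 0} = ({0} : Set (Fin 3)) := by
      ext m; fin_cases m <;> simp [h0, h1, h2']
    rw [this, Set.ncard_singleton] at h2; omega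
  · exact key q F hcard u 0 2 1 (by decide) (by decide) (by decide) h0 h2' h1
      (hd 0 2 (by decide) h0 h2')
  · exact key q F hcard u 0 1 2 (by decide) (by decide) (by decide) h0 h1 h2'
      (hd 0 1 (by decide) h0 h1)
  · have : {i : Fin 3 | u i ≠ 0} = (Set.univ : Set (Fin 3)) := by
      ext m; fin_cases m <;> simp [h0, h1, h2']
    rw [this, Set.ncard_univ] at h2; simp [Nat.card_eq_fintype_card] at h2
end

section
/- Let q be a prime power and u ∈ 𝔽_q³ a vector whose three coordinates are pairwise distinct and all nonzero (i.e., u ∈ D_q). Then |Ẽ(u)| = (q-1)(3q-11). -/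
open Set Pointwise

variable {F : Type*} [Field F]

/-! ### Auxiliary lemmas -/

lemma mem_ball_iff' (w v : Fin 3 → F) :
    v ∈ ball w ↔ ∀ i j, w i ≠ v i → w j ≠ v j → i = j := by
  simp only [ball, Set.mem_setOf_eq, hdist]
  rw [Set.ncard_le_one (Set.toFinite _)]
  simp only [Set.mem_setOf_eq]
  tauto

lemma Dq.ne_zero' {v : Fin 3 → F} (hv : v ∈ Dq) : ∀ i, v i ≠ 0 := by
  obtain ⟨-, -, -, h4, h5, h6⟩ := hv
  intro i; fin_cases i
  · exact h4
  · exact h5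
  · exact h6

lemma Dq.inj' {v : Fin 3 → F} (hv : v ∈ Dq) : Function.Injective v := by
  intro i j h
  by_contra hne
  obtain ⟨h1, h2, h3, -⟩ := hv
  fin_cases i <;> fin_cases j <;> simp_all

lemma smul_mem_Dq {u : Fin 3 → F} (hu : u ∈ Dq) {l : F} (hl : l ≠ 0) : l • u ∈ Dq := by
  obtain ⟨h1, h2, h3, h4, h5, h6⟩ := hu
  refine ⟨?_, ?_, ?_, ?_, ?_, ?_⟩ <;>
    simp only [Pi.smul_apply, smul_eq_mul] <;>
    first
      | (intro h; exact (by tauto : ¬ _) (mul_left_cancel₀ hl h))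
      | exact mul_ne_zero hl (by tauto)

lemma ball_zero_disj {v : Fin 3 → F} (hv : v ∈ Dq) : v ∉ ball (0 : Fin 3 → F) := by
  intro hb
  rw [mem_ball_iff'] at hb
  have h0 : (0 : Fin 3 → F) 0 ≠ v 0 := fun h => Dq.ne_zero' hv 0 h.symm
  have h1 : (0 : Fin 3 → F) 1 ≠ v 1 := fun h => Dq.ne_zero' hv 1 h.symm
  exact absurd (hb 0 1 h0 h1) (by decide)

/-- The key decomposition of `ballD w` for `w ∈ Dq`. -/
lemma ballD_eq {w : Fin 3 → F} (hw : w ∈ Dq) :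
    ballD w = insert w
      ((Function.update w 0 '' {a : F | a ∉ ({0, w 0, w 1, w 2} : Set F)}) ∪
       (Function.update w 1 '' {a : F | a ∉ ({0, w 0, w 1, w 2} : Set F)}) ∪
       (Function.update w 2 '' {a : F | a ∉ ({0, w 0, w 1, w 2} : Set F)})) := by
  ext v
  constructor
  · rintro ⟨hb, hv⟩
    by_cases hvw : v = w
    · exact Or.inl hvw
    right
    obtain ⟨k, hk⟩ : ∃ k, v k ≠ w k := by
      by_contra h; push_neg at h; exact hvw (funext h)
    rw [mem_ball_iff'] at hb
    have h2 : ∀ i, i ≠ k → v i = w i := by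
      intro i hik
      by_contra h
      exact hik (hb i k (fun e => h e.symm) (fun e => hk e.symm))
    have hvk : v k ∉ ({0, w 0, w 1, w 2} : Set F) := by
      have hne : ∀ i, v k ≠ w i := by
        intro i
        rcases eq_or_ne i k with rfl | hik
        · exact hk
        · rw [← h2 i hik]
          exact fun e => hik (Dq.inj' hv e).symm
      simp only [Set.mem_insert_iff, Set.mem_singleton_iff]
      push_neg
      exact ⟨Dq.ne_zero' hv k, hne 0, hne 1, hne 2⟩
    have hveq : v = Function.update w k (v k) := by
      funext i
      rcases eq_or_ne i k with rfl | hik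
      · rw [Function.update_self]
      · rw [Function.update_of_ne hik, h2 i hik]
    fin_cases k
    · exact Or.inl (Or.inl ⟨v 0, hvk, hveq.symm⟩)
    · exact Or.inl (Or.inr ⟨v 1, hvk, hveq.symm⟩)
    · exact Or.inr ⟨v 2, hvk, hveq.symm⟩
  · intro h
    have hupd : ∀ (k : Fin 3) (a : F), a ∉ ({0, w 0, w 1, w 2} : Set F) →
        Function.update w k a ∈ ballD w := by
      intro k a ha
      simp only [Set.mem_insert_iff, Set.mem_singleton_iff] at ha
      push_neg at ha
      obtain ⟨ha0, haw0, haw1, haw2⟩ := ha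
      constructor
      · rw [mem_ball_iff']
        intro i j hi hj
        have hik : i = k := by
          by_contra hik
          rw [Function.update_of_ne hik] at hi
          exact hi rfl
        have hjk : j = k := by
          by_contra hjk
          rw [Function.update_of_ne hjk] at hj
          exact hj rfl
        rw [hik, hjk]
      · obtain ⟨h1, h2, h3, h4, h5, h6⟩ := hw
        fin_cases k <;>
          refine ⟨?_, ?_, ?_, ?_, ?_, ?_⟩ <;>
          simp only [Function.update_self,
            Function.update_of_ne (show (0:Fin 3) ≠ 1 by decide),
            Function.update_of_ne (show (0:Fin 3) ≠ 2 by decide),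
            Function.update_of_ne (show (1:Fin 3) ≠ 0 by decide),
            Function.update_of_ne (show (1:Fin 3) ≠ 2 by decide),
            Function.update_of_ne (show (2:Fin 3) ≠ 0 by decide),
            Function.update_of_ne (show (2:Fin 3) ≠ 1 by decide)] <;>
          first | assumption | exact Ne.symm (by assumption)
    rcases h with rfl | (⟨a, ha, rfl⟩ | ⟨a, ha, rfl⟩) | ⟨a, ha, rfl⟩
    · refine ⟨?_, hw⟩
      rw [mem_ball_iff']
      intro i j hi _
      exact absurd rfl hi
    · exact hupd 0 a ha
    · exact hupd 1 a ha
    · exact hupd 2 a ha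

lemma ncard_ballD [Fintype F] {w : Fin 3 → F} (hw : w ∈ Dq) :
    (ballD w).ncard = 1 + 3 * (Fintype.card F - 4) := by
  classical
  obtain ⟨h1, h2, h3, h4, h5, h6⟩ := hw
  set A : Set F := {a : F | a ∉ ({0, w 0, w 1, w 2} : Set F)} with hA
  have hAcard : A.ncard = Fintype.card F - 4 := by
    have : A = Set.univ \ ({0, w 0, w 1, w 2} : Set F) := by
      ext a; simp [hA]
    rw [this, Set.ncard_diff (Set.subset_univ _), Set.ncard_univ,
      Nat.card_eq_fintype_card]
    congr 1
    rw [Set.ncard_insert_of_notMem (by simp [Ne.symm h4, Ne.symm h5, Ne.symm h6]),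
      Set.ncard_insert_of_notMem (by simp [h1, h2]),
      Set.ncard_pair h3]
  have hdisj : ∀ (j k : Fin 3), j ≠ k →
      Disjoint (Function.update w j '' A) (Function.update w k '' A) := by
    intro j k hjk
    rw [Set.disjoint_left]
    rintro x ⟨a, ha, rfl⟩ ⟨b, hb, heq⟩
    have hj := congrFun heq j
    rw [Function.update_of_ne hjk, Function.update_self] at hj
    simp only [hA, Set.mem_setOf_eq, Set.mem_insert_iff, Set.mem_singleton_iff] at ha
    push_neg at ha
    fin_cases j
    · exact ha.2.1 hj.symm
    · exact ha.2.2.1 hj.symm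
    · exact ha.2.2.2 hj.symm
  have himg : ∀ (k : Fin 3), (Function.update w k '' A).ncard = A.ncard :=
    fun k => Set.ncard_image_of_injective A (Function.update_injective w k)
  have hwni : w ∉ (Function.update w 0 '' A) ∪ (Function.update w 1 '' A) ∪
      (Function.update w 2 '' A) := by
    have : ∀ (k : Fin 3), w ∉ Function.update w k '' A := by
      rintro k ⟨a, ha, heq⟩
      have := congrFun heq k
      rw [Function.update_self] at this
      simp [hA] at ha
      fin_cases k <;> tauto
    simp only [Set.mem_union, not_or]
    exact ⟨⟨this 0, this 1⟩, this 2⟩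
  rw [ballD_eq ⟨h1, h2, h3, h4, h5, h6⟩, Set.ncard_insert_of_notMem hwni (Set.toFinite _)]
  rw [Set.ncard_union_eq (by
      rw [Set.disjoint_union_left]
      exact ⟨hdisj 0 2 (by decide), hdisj 1 2 (by decide)⟩)
    (Set.toFinite _) (Set.toFinite _),
    Set.ncard_union_eq (hdisj 0 1 (by decide)) (Set.toFinite _) (Set.toFinite _),
    himg 0, himg 1, himg 2, hAcard]
  ring

lemma ncard_finset_biUnion {ι α : Type*} (s : Finset ι) (f : ι → Set α)
    (hfin : ∀ i, (f i).Finite)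
    (hdisj : ∀ i ∈ s, ∀ j ∈ s, i ≠ j → Disjoint (f i) (f j)) :
    (⋃ i ∈ s, f i).ncard = ∑ i ∈ s, (f i).ncard := by
  classical
  induction s using Finset.induction with
  | empty => simp
  | @insert a s ha ih =>
    have hfin2 : (⋃ i ∈ s, f i).Finite := by
      rw [← Finset.set_biUnion_coe]
      exact s.finite_toSet.biUnion fun i _ => hfin i
    rw [Finset.set_biUnion_insert, Finset.sum_insert ha,
      Set.ncard_union_eq ?_ (hfin a) hfin2,
      ih (fun i hi j hj hij => hdisj i (Finset.mem_insert_of_mem hi)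
        j (Finset.mem_insert_of_mem hj) hij)]
    rw [Set.disjoint_iUnion_right]
    intro i
    rw [Set.disjoint_iUnion_right]
    intro hi
    exact hdisj a (Finset.mem_insert_self a s) i (Finset.mem_insert_of_mem hi)
      (fun h => ha (h ▸ hi))

lemma four_le_card [Fintype F] {w : Fin 3 → F} (hw : w ∈ Dq) : 4 ≤ Fintype.card F := by
  classical
  obtain ⟨h1, h2, h3, h4, h5, h6⟩ := hw
  have : ({0, w 0, w 1, w 2} : Set F).ncard = 4 := by
    rw [Set.ncard_insert_of_notMem (by simp [Ne.symm h4, Ne.symm h5, Ne.symm h6]),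
      Set.ncard_insert_of_notMem (by simp [h1, h2]),
      Set.ncard_pair h3]
  calc 4 = ({0, w 0, w 1, w 2} : Set F).ncard := this.symm
    _ ≤ (Set.univ : Set F).ncard := Set.ncard_le_ncard (Set.subset_univ _) (Set.toFinite _)
    _ = Fintype.card F := by rw [Set.ncard_univ, Nat.card_eq_fintype_card]

lemma extBallD_disjoint [Fintype F] {u : Fin 3 → F} (hu : u ∈ Dq) {l m : F}
    (hl : l ≠ 0) (hlm : l ≠ m) : Disjoint (ballD (l • u)) (ballD (m • u)) := by
  rw [Set.disjoint_left]
  rintro v ⟨hbl, hv⟩ ⟨hbm, -⟩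
  set A : Set (Fin 3) := {i | (l • u) i ≠ v i} with hA
  set B : Set (Fin 3) := {i | (m • u) i ≠ v i} with hB
  have hAB : A ∪ B ≠ Set.univ := by
    intro h
    have h3 : (Set.univ : Set (Fin 3)).ncard = 3 := by
      rw [Set.ncard_univ]; simp
    have := Set.ncard_union_le A B
    rw [h, h3] at this
    have hAle : A.ncard ≤ 1 := hbl
    have hBle : B.ncard ≤ 1 := hbm
    omega
  obtain ⟨i, hi⟩ := Set.ne_univ_iff_exists_notMem _ |>.mp hAB
  simp only [Set.mem_union, hA, hB, Set.mem_setOf_eq, not_or, not_not] at hi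
  have : l * u i = m * u i := by
    have h1 := hi.1; have h2 := hi.2
    simp only [Pi.smul_apply, smul_eq_mul] at h1 h2
    rw [h1, h2]
  exact hlm (mul_right_cancel₀ (Dq.ne_zero' hu i) this)

theorem stmt_7 (q : ℕ) (hq : IsPrimePow q) (F : Type*) [Field F] [Fintype F]
    (hcard : Fintype.card F = q) (u : Fin 3 → F) (hu : u ∈ (Dq : Set (Fin 3 → F))) :
    (extBallD u).ncard = (q - 1) * (3 * q - 11) := by
  classical
  have hq4 : 4 ≤ q := hcard ▸ four_le_card hu
  have key : extBallD u = ⋃ l ∈ (Finset.univ.erase (0 : F)), ballD (l • u) := by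
    ext v
    simp only [extBallD, extBall, Set.mem_inter_iff, Set.mem_iUnion, ballD,
      Finset.mem_coe, Finset.mem_erase, Finset.mem_univ, and_true, exists_prop]
    constructor
    · rintro ⟨⟨l, hl⟩, hv⟩
      refine ⟨l, ?_, hl, hv⟩
      rintro rfl
      rw [zero_smul] at hl
      exact ball_zero_disj hv hl
    · rintro ⟨l, -, hl, hv⟩
      exact ⟨⟨l, hl⟩, hv⟩
  rw [key, ncard_finset_biUnion _ _ (fun _ => Set.toFinite _)
    (fun l hl m hm hlm => extBallD_disjoint hu (Finset.ne_of_mem_erase hl) hlm)]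
  have : ∀ l ∈ Finset.univ.erase (0 : F), (ballD (l • u)).ncard = 3 * q - 11 := by
    intro l hl
    rw [ncard_ballD (smul_mem_Dq hu (Finset.ne_of_mem_erase hl)), hcard]
    omega
  rw [Finset.sum_congr rfl this, Finset.sum_const, smul_eq_mul,
    Finset.card_erase_of_mem (Finset.mem_univ _), Finset.card_univ, hcard]
end

section
/- Let q be a prime power and u, v ∈ 𝔽_q³. Suppose that the sets B̃(λu), for λ ranging over 𝔽_q*, are pairwise disjoint, and likewise the sets B̃(λv), for λ ranging over 𝔽_q*, are pairwise disjoint. Then |Ẽ(u) ∩ Ẽ(v)| = (q-1)·∑_{μ ∈ 𝔽_q*} |B̃(u) ∩ B̃(μv)|. -/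
open Set Pointwise

variable {F : Type*} [Field F]

lemma my_smul_mem_ball_smul {c : F} (hc : c ≠ 0) (x w : Fin 3 → F) :
    c • w ∈ ball (c • x) ↔ w ∈ ball x := by
  have h : {i : Fin 3 | (c • x) i ≠ (c • w) i} = {i : Fin 3 | x i ≠ w i} := by
    ext i; simp [Pi.smul_apply, smul_eq_mul, mul_right_inj' hc]
  have h2 : hdist (c • x) (c • w) = hdist x w := by unfold hdist; rw [h]
  simp only [ball, Set.mem_setOf_eq, h2]

lemma my_smul_mem_Dq {c : F} (hc : c ≠ 0) (w : Fin 3 → F) :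
    c • w ∈ Dq ↔ w ∈ Dq := by
  simp [Dq, Pi.smul_apply, smul_eq_mul, mul_right_inj' hc, mul_eq_zero, hc]

lemma my_ballD_smul {c : F} (hc : c ≠ 0) (x : Fin 3 → F) :
    ballD (c • x) = (c • ·) '' ballD x := by
  ext w
  constructor
  · rintro ⟨hb, hD⟩
    refine ⟨c⁻¹ • w, ⟨?_, ?_⟩, by simp [smul_smul, mul_inv_cancel₀ hc]⟩
    · have : c • (c⁻¹ • w) ∈ ball (c • x) := by
        simpa [smul_smul, mul_inv_cancel₀ hc] using hb
      exact (my_smul_mem_ball_smul hc x _).mp this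
    · have : c • (c⁻¹ • w) ∈ Dq := by
        simpa [smul_smul, mul_inv_cancel₀ hc] using hD
      exact (my_smul_mem_Dq hc _).mp this
  · rintro ⟨y, ⟨hb, hD⟩, rfl⟩
    exact ⟨(my_smul_mem_ball_smul hc x y).mpr hb, (my_smul_mem_Dq hc y).mpr hD⟩

lemma my_extBallD_eq (u : Fin 3 → F) [DecidableEq F] :
    extBallD u = ⋃ l : Fˣ, ballD ((l : F) • u) := by
  ext w
  simp only [extBallD, extBall, ballD, mem_inter_iff, mem_iUnion]
  constructor
  · rintro ⟨⟨c, hc⟩, hD⟩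
    rcases eq_or_ne c 0 with rfl | hne
    · exfalso
      have h0 : {i : Fin 3 | ((0 : F) • u) i ≠ w i} = Set.univ := by
        apply eq_univ_iff_forall.mpr
        intro i
        fin_cases i <;> simp [Pi.smul_apply] <;>
          [exact (hD.2.2.2.1).symm; exact (hD.2.2.2.2.1).symm; exact (hD.2.2.2.2.2).symm]
      have h3 : hdist ((0 : F) • u) w = 3 := by
        unfold hdist; rw [h0]; simp [Set.ncard_univ]
      simp only [ball, Set.mem_setOf_eq, h3] at hc
      omega
    · exact ⟨Units.mk0 c hne, hc, hD⟩
  · rintro ⟨l, hb, hD⟩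
    exact ⟨⟨(l : F), hb⟩, hD⟩

lemma my_ncard_iUnion_eq_sum {ι α : Type*} [Fintype ι] [Fintype α] [DecidableEq α]
    (f : ι → Set α) (h : Pairwise (Function.onFun Disjoint f)) :
    (⋃ i, f i).ncard = ∑ i, (f i).ncard := by
  classical
  have key : (⋃ i, f i).toFinset = Finset.univ.biUnion (fun i => (f i).toFinset) := by
    ext a; simp
  rw [Set.ncard_eq_toFinset_card', key, Finset.card_biUnion]
  · exact Finset.sum_congr rfl fun i _ => (Set.ncard_eq_toFinset_card' (f i)).symm
  · intro i _ j _ hij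
    have := h hij
    rw [Function.onFun, Finset.disjoint_left]
    intro a ha hb
    exact (Set.disjoint_left.mp this (by simpa using ha)) (by simpa using hb)

theorem stmt_10 (q : ℕ) (hq : IsPrimePow q) (F : Type*) [Field F] [Fintype F] [DecidableEq F]
    (hcard : Fintype.card F = q) (u v : Fin 3 → F)
    (hu : ∀ l l' : F, l ≠ 0 → l' ≠ 0 → l ≠ l' → ballD (l • u) ∩ ballD (l' • u) = ∅)
    (hv : ∀ l l' : F, l ≠ 0 → l' ≠ 0 → l ≠ l' → ballD (l • v) ∩ ballD (l' • v) = ∅) :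
    (extBallD u ∩ extBallD v).ncard =
      (q - 1) * ∑ m : Fˣ, (ballD u ∩ ballD ((m : F) • v)).ncard := by
  classical
  set S : Fˣ × Fˣ → Set (Fin 3 → F) :=
    fun p => ballD ((p.1 : F) • u) ∩ ballD ((p.2 : F) • v) with hS
  have hunion : extBallD u ∩ extBallD v = ⋃ p : Fˣ × Fˣ, S p := by
    rw [my_extBallD_eq u, my_extBallD_eq v]
    ext w
    simp only [hS, mem_inter_iff, mem_iUnion, Prod.exists]
    constructor
    · rintro ⟨⟨l, hl⟩, ⟨m, hm⟩⟩; exact ⟨l, m, hl, hm⟩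
    · rintro ⟨l, m, hl, hm⟩; exact ⟨⟨l, hl⟩, ⟨m, hm⟩⟩
  have hdisj : Pairwise (Function.onFun Disjoint S) := by
    intro p p' hpp
    rcases eq_or_ne p.1 p'.1 with h1 | h1
    · have h2 : p.2 ≠ p'.2 := by
        intro h2; exact hpp (Prod.ext h1 h2)
      have := hv (p.2 : F) (p'.2 : F) (Units.ne_zero _) (Units.ne_zero _)
        (fun h => h2 (Units.ext h))
      rw [Function.onFun, Set.disjoint_iff_inter_eq_empty]
      apply Set.eq_empty_of_subset_empty
      rw [← this]
      intro w hw
      exact ⟨hw.1.2, hw.2.2⟩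
    · have := hu (p.1 : F) (p'.1 : F) (Units.ne_zero _) (Units.ne_zero _)
        (fun h => h1 (Units.ext h))
      rw [Function.onFun, Set.disjoint_iff_inter_eq_empty]
      apply Set.eq_empty_of_subset_empty
      rw [← this]
      intro w hw
      exact ⟨hw.1.1, hw.2.1⟩
  have hinj : ∀ c : F, c ≠ 0 → Function.Injective (c • · : (Fin 3 → F) → (Fin 3 → F)) :=
    fun c hc => smul_right_injective _ hc
  have hcardS : ∀ l m : Fˣ, (S (l, m)).ncard = (ballD u ∩ ballD (((l⁻¹ * m : Fˣ) : F) • v)).ncard := by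
    intro l m
    have himg : ((l : F) • ·) '' (ballD u ∩ ballD (((l⁻¹ * m : Fˣ) : F) • v))
        = ballD ((l : F) • u) ∩ ballD ((m : F) • v) := by
      rw [Set.image_inter (hinj _ (Units.ne_zero l)), ← my_ballD_smul (Units.ne_zero l) u,
        ← my_ballD_smul (Units.ne_zero l)]
      congr 2
      rw [smul_smul]
      congr 1
      rw [Units.val_mul, Units.val_inv_eq_inv_val, ← mul_assoc,
        mul_inv_cancel₀ (Units.ne_zero l), one_mul]
    have : S (l, m) = ballD ((l : F) • u) ∩ ballD ((m : F) • v) := rfl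
    rw [this, ← himg, Set.ncard_image_of_injective _ (hinj _ (Units.ne_zero l))]
  rw [hunion, my_ncard_iUnion_eq_sum S hdisj, Fintype.sum_prod_type]
  have hrow : ∀ l : Fˣ, (∑ m : Fˣ, (S (l, m)).ncard)
      = ∑ m : Fˣ, (ballD u ∩ ballD ((m : F) • v)).ncard := by
    intro l
    rw [Finset.sum_congr rfl (fun m _ => hcardS l m)]
    exact Fintype.sum_equiv (Equiv.mulLeft l⁻¹) _ _ (fun m => rfl)
  rw [Finset.sum_congr rfl (fun l _ => hrow l), Finset.sum_const, Finset.card_univ,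
    Fintype.card_units, hcard, smul_eq_mul]
end

section
/- Let q be a prime power and u, v ∈ 𝔽_q³ vectors with Ẽ(u) ≠ ∅ and Ẽ(v) ≠ ∅. Then |Ẽ(u) ∩ Ẽ(v)| = (q-1)·∑_{μ ∈ 𝔽_q*} |B̃(u) ∩ B̃(μv)|. -/
open Set Pointwise

variable {F : Type*} [Field F]

/- ### Auxiliary lemmas -/

lemma hdist_smul (c : F) (hc : c ≠ 0) (u v : Fin 3 → F) :
    hdist (c • u) (c • v) = hdist u v := by
  unfold hdist
  congr 1
  ext i
  simp only [Set.mem_setOf_eq, Pi.smul_apply, smul_eq_mul]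
  exact not_congr (mul_right_inj' hc)

lemma mem_Dq_smul (c : F) (hc : c ≠ 0) (x : Fin 3 → F) :
    c • x ∈ Dq ↔ x ∈ Dq := by
  simp only [Dq, Set.mem_setOf_eq, Pi.smul_apply, smul_eq_mul, mul_ne_zero_iff,
    not_congr (mul_right_inj' hc), iff_self_and]
  tauto

lemma mem_ballD_smul (c : F) (hc : c ≠ 0) (u x : Fin 3 → F) :
    c • x ∈ ballD (c • u) ↔ x ∈ ballD u := by
  simp only [ballD, ball, Set.mem_inter_iff, Set.mem_setOf_eq, hdist_smul c hc,
    mem_Dq_smul c hc]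

lemma ballD_smul_inter (c : F) (hc : c ≠ 0) (u w : Fin 3 → F) :
    ballD (c • u) ∩ ballD (c • w) = (fun x => c • x) '' (ballD u ∩ ballD w) := by
  ext y
  constructor
  · rintro ⟨h1, h2⟩
    refine ⟨c⁻¹ • y, ?_, ?_⟩
    · have hy : c • (c⁻¹ • y) = y := by
        rw [smul_smul, mul_inv_cancel₀ hc, one_smul]
      constructor
      · rw [← mem_ballD_smul c hc, hy]; exact h1
      · rw [← mem_ballD_smul c hc, hy]; exact h2
    · show c • (c⁻¹ • y) = y
      rw [smul_smul, mul_inv_cancel₀ hc, one_smul]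
  · rintro ⟨x, ⟨h1, h2⟩, rfl⟩
    exact ⟨(mem_ballD_smul c hc u x).2 h1, (mem_ballD_smul c hc w x).2 h2⟩

lemma ball_disj {a b : F} (hab : a ≠ b) {u x : Fin 3 → F} (hx : x ∈ Dq)
    (h1 : x ∈ ball (a • u)) (h2 : x ∈ ball (b • u)) : False := by
  have h1' : ({i : Fin 3 | a * u i ≠ x i}).ncard ≤ 1 := by
    have := h1; simpa [ball, hdist, Pi.smul_apply, smul_eq_mul] using this
  have h2' : ({i : Fin 3 | b * u i ≠ x i}).ncard ≤ 1 := by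
    have := h2; simpa [ball, hdist, Pi.smul_apply, smul_eq_mul] using this
  set S := {i : Fin 3 | a * u i ≠ x i}
  set T := {i : Fin 3 | b * u i ≠ x i}
  have hne : S ∪ T ≠ Set.univ := by
    intro h
    have h3 : (S ∪ T).ncard = 3 := by
      rw [h, Set.ncard_univ]; simp [Nat.card_eq_fintype_card]
    have := Set.ncard_union_le S T
    omega
  obtain ⟨i, hi⟩ := Set.ne_univ_iff_exists_notMem _ |>.1 hne
  simp only [S, T, Set.mem_union, Set.mem_setOf_eq, not_or, not_not] at hi
  obtain ⟨hia, hib⟩ := hi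
  have hui : u i = 0 := by
    by_contra hui
    exact hab (mul_right_cancel₀ hui (hia.trans hib.symm))
  have hxi : x i = 0 := by rw [← hia, hui, mul_zero]
  obtain ⟨-, -, -, h0, h1, h2⟩ := hx
  fin_cases i <;> simp_all

lemma notMem_ball_zero {x : Fin 3 → F} (hx : x ∈ Dq) : x ∉ ball (0 : Fin 3 → F) := by
  intro h
  have heq : {i : Fin 3 | (0 : Fin 3 → F) i ≠ x i} = Set.univ := by
    ext i
    obtain ⟨-, -, -, h0, h1, h2⟩ := hx
    fin_cases i <;> simp_all [eq_comm]
  have : hdist (0 : Fin 3 → F) x = 3 := by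
    rw [hdist, heq, Set.ncard_univ]; simp [Nat.card_eq_fintype_card]
  simp only [ball, Set.mem_setOf_eq, this] at h
  omega

lemma ncard_iUnion_eq_sum {α ι : Type*} [Fintype ι] [DecidableEq α] (f : ι → Set α)
    (hfin : ∀ i, (f i).Finite) (hdisj : Pairwise (Function.onFun Disjoint f)) :
    (⋃ i, f i).ncard = ∑ i, (f i).ncard := by
  classical
  have hcoe : (⋃ i, f i) = ↑(Finset.univ.biUnion fun i => (hfin i).toFinset) := by
    rw [Finset.coe_biUnion]
    simp [Set.Finite.coe_toFinset]
  rw [hcoe, Set.ncard_coe_finset, Finset.card_biUnion]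
  · exact Finset.sum_congr rfl fun i _ => by
      rw [Set.ncard_eq_toFinset_card _ (hfin i)]
  · intro i _ j _ hij
    have := hdisj hij
    simpa [Finset.disjoint_left, Set.Finite.mem_toFinset, Set.disjoint_left] using this

theorem stmt_11 (q : ℕ) (hq : IsPrimePow q) (F : Type*) [Field F] [Fintype F] [DecidableEq F]
    (hcard : Fintype.card F = q) (u v : Fin 3 → F)
    (hu : (extBallD u).Nonempty) (hv : (extBallD v).Nonempty) :
    (extBallD u ∩ extBallD v).ncard =
      (q - 1) * ∑ m : Fˣ, (ballD u ∩ ballD ((m : F) • v)).ncard := by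
  classical
  set f : Fˣ × Fˣ → Set (Fin 3 → F) :=
    fun p => ballD ((p.1 : F) • u) ∩ ballD ((p.2 : F) • v) with hf
  -- Step 1: the intersection of the extended balls is the union of the `f p`.
  have hset : extBallD u ∩ extBallD v = ⋃ p : Fˣ × Fˣ, f p := by
    ext x
    constructor
    · rintro ⟨⟨hxu, hxD⟩, ⟨hxv, -⟩⟩
      simp only [extBall, Set.mem_iUnion] at hxu hxv
      obtain ⟨l, hl⟩ := hxu
      obtain ⟨m, hm⟩ := hxv
      have hl0 : l ≠ 0 := by
        rintro rfl
        rw [zero_smul] at hl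
        exact notMem_ball_zero hxD hl
      have hm0 : m ≠ 0 := by
        rintro rfl
        rw [zero_smul] at hm
        exact notMem_ball_zero hxD hm
      refine Set.mem_iUnion.2 ⟨(Units.mk0 l hl0, Units.mk0 m hm0), ⟨⟨hl, hxD⟩, ⟨hm, hxD⟩⟩⟩
    · intro hx
      obtain ⟨p, ⟨hb1, hD⟩, hb2, -⟩ := Set.mem_iUnion.1 hx
      exact ⟨⟨Set.mem_iUnion.2 ⟨(p.1 : F), hb1⟩, hD⟩, ⟨Set.mem_iUnion.2 ⟨(p.2 : F), hb2⟩, hD⟩⟩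
  -- Step 2: the `f p` are pairwise disjoint.
  have hdisj : Pairwise (Function.onFun Disjoint f) := by
    intro p p' hpp'
    rw [Function.onFun, Set.disjoint_left]
    rintro x ⟨⟨hb1, hD⟩, hb2, -⟩ ⟨⟨hb1', -⟩, hb2', -⟩
    have hne : p.1 ≠ p'.1 ∨ p.2 ≠ p'.2 := by
      by_contra h
      push_neg at h
      exact hpp' (Prod.ext h.1 h.2)
    rcases hne with h | h
    · exact ball_disj (fun he => h (Units.ext he)) hD hb1 hb1'
    · exact ball_disj (fun he => h (Units.ext he)) hD hb2 hb2'
  -- Step 3: reduce each term to the unscaled one.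
  have key : ∀ l m : Fˣ, (f (l, m)).ncard =
      (ballD u ∩ ballD (((l⁻¹ * m : Fˣ) : F) • v)).ncard := by
    intro l m
    have hc : (l : F) ≠ 0 := l.ne_zero
    have hvm : ((m : F)) • v = (l : F) • (((l⁻¹ * m : Fˣ) : F) • v) := by
      rw [smul_smul]
      congr 1
      push_cast
      field_simp
    rw [hf]
    simp only
    rw [hvm, ballD_smul_inter (l : F) hc,
      Set.ncard_image_of_injective _ (smul_right_injective _ hc)]
  rw [hset, ncard_iUnion_eq_sum f (fun p => Set.toFinite _) hdisj, Fintype.sum_prod_type]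
  have hrow : ∀ l : Fˣ, ∑ m : Fˣ, (f (l, m)).ncard =
      ∑ m : Fˣ, (ballD u ∩ ballD ((m : F) • v)).ncard := by
    intro l
    calc ∑ m : Fˣ, (f (l, m)).ncard
        = ∑ m : Fˣ, (ballD u ∩ ballD (((l⁻¹ * m : Fˣ) : F) • v)).ncard :=
          Finset.sum_congr rfl fun m _ => key l m
      _ = ∑ m : Fˣ, (ballD u ∩ ballD ((m : F) • v)).ncard :=
          Fintype.sum_equiv (Equiv.mulLeft l⁻¹)
            (fun m => (ballD u ∩ ballD (((l⁻¹ * m : Fˣ) : F) • v)).ncard)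
            (fun m => (ballD u ∩ ballD ((m : F) • v)).ncard) (fun m => rfl)
  rw [Finset.sum_congr rfl fun l _ => hrow l, Finset.sum_const, Finset.card_univ,
    Fintype.card_units, hcard, smul_eq_mul]
end

section
/- Let q be a prime power with q ≥ 7 and let H be a short covering of 𝔽_q³ with |H| ≤ ⌈(q+1)/2⌉. Then (1) H contains a vector all of whose three coordinates are nonzero, and (2) for each coordinate index j ∈ {1,2,3} there exists a vector h ∈ H whose j-th coordinate is zero. -/
open Set Pointwise

variable {F : Type*} [Field F]

lemma fin3_cases : ∀ (i0 i1 i2 i : Fin 3), i0 ≠ i1 → i0 ≠ i2 → i1 ≠ i2 →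
    (i = i0 ∨ i = i1 ∨ i = i2) := by decide

lemma mem_extBall {u v : Fin 3 → F} : v ∈ extBall u ↔ ∃ l : F, hdist (l • u) v ≤ 1 := by
  simp [extBall, ball, Set.mem_iUnion, Set.mem_setOf_eq]

lemma hdist_agree {u v : Fin 3 → F} (hle : hdist u v ≤ 1) {i j : Fin 3} (hij : j ≠ i)
    (hi : u i ≠ v i) : u j = v j := by
  by_contra hj
  have hsub : ({i, j} : Set (Fin 3)) ⊆ {k : Fin 3 | u k ≠ v k} := by
    intro k hk
    rcases hk with rfl | hk
    · exact hi
    · simp only [Set.mem_singleton_iff] at hk; subst hk; exact hj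
  have h2 : ({i, j} : Set (Fin 3)).ncard = 2 := Set.ncard_pair (Ne.symm hij)
  have := Set.ncard_le_ncard hsub (Set.toFinite _)
  rw [h2] at this
  exact absurd (this.trans hle) (by norm_num)

lemma Dq_ne_zero {v : Fin 3 → F} (hv : v ∈ Dq) (i : Fin 3) : v i ≠ 0 := by
  obtain ⟨_, _, _, h0, h1, h2⟩ := hv; fin_cases i <;> assumption

lemma Dq_ne {v : Fin 3 → F} (hv : v ∈ Dq) {i j : Fin 3} (hij : i ≠ j) : v i ≠ v j := by
  obtain ⟨a, b, c, -, -, -⟩ := hv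
  fin_cases i <;> fin_cases j <;>
    first
      | exact absurd rfl hij
      | assumption
      | exact a.symm
      | exact b.symm
      | exact c.symm

lemma ncard_biUnion_le {α β : Type*} [Fintype β] (s : Finset α) (f : α → Set β) :
    (⋃ a ∈ s, f a).ncard ≤ ∑ a ∈ s, (f a).ncard := by
  classical
  induction s using Finset.induction_on with
  | empty => simp
  | insert a t hx ih =>
    rw [Finset.sum_insert hx]
    simp only [Finset.mem_insert, Set.iUnion_iUnion_eq_or_left]
    exact (Set.ncard_union_le _ _).trans (by omega)

-- structural fact
lemma extBallD_struct {h v : Fin 3 → F} {i0 i1 i2 : Fin 3} (h01 : i0 ≠ i1) (h02 : i0 ≠ i2)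
    (hz : h i0 = 0) (hv : v ∈ extBallD h) :
    ∃ l : F, v i1 = l * h i1 ∧ v i2 = l * h i2 := by
  obtain ⟨hvE, hvD⟩ := hv
  obtain ⟨l, hl⟩ := mem_extBall.mp hvE
  have hi0 : (l • h) i0 ≠ v i0 := by
    simp only [Pi.smul_apply, smul_eq_mul, hz, mul_zero]
    exact (Dq_ne_zero hvD i0).symm
  have e1 := hdist_agree hl h01.symm hi0
  have e2 := hdist_agree hl h02.symm hi0
  simp only [Pi.smul_apply, smul_eq_mul] at e1 e2
  exact ⟨l, e1.symm, e2.symm⟩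

lemma extBallD_ncard_le [Fintype F] (q : ℕ) (hcard : Fintype.card F = q)
    (h : Fin 3 → F) (i0 i1 i2 : Fin 3) (h01 : i0 ≠ i1) (h02 : i0 ≠ i2) (h12 : i1 ≠ i2)
    (hz : h i0 = 0) : (extBallD h).ncard ≤ (q - 1) * (q - 3) := by
  classical
  by_cases hE : extBallD h = ∅
  · simp [hE]
  -- extBallD h is nonempty; deduce h i1 ≠ 0, h i2 ≠ 0, h i1 ≠ h i2
  obtain ⟨w, hw⟩ := Set.nonempty_iff_ne_empty.mpr hE
  have h1ne : h i1 ≠ 0 := by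
    intro hc
    obtain ⟨l, e1, _⟩ := extBallD_struct h01 h02 hz hw
    exact Dq_ne_zero hw.2 i1 (by rw [e1, hc, mul_zero])
  have h2ne : h i2 ≠ 0 := by
    intro hc
    obtain ⟨l, _, e2⟩ := extBallD_struct h01 h02 hz hw
    exact Dq_ne_zero hw.2 i2 (by rw [e2, hc, mul_zero])
  have h12ne : h i1 ≠ h i2 := by
    intro hc
    obtain ⟨l, e1, e2⟩ := extBallD_struct h01 h02 hz hw
    exact Dq_ne hw.2 h12 (by rw [e1, e2, hc])
  set c : F := h i2 / h i1 with hc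
  have hc0 : c ≠ 0 := div_ne_zero h2ne h1ne
  have hc1 : c ≠ 1 := by
    intro hcc
    apply h12ne
    rw [hc, div_eq_one_iff_eq h1ne] at hcc
    exact hcc.symm ▸ rfl
  -- the map and target
  set g : (Fin 3 → F) → F × F := fun v => (v i1, v i0 / v i1) with hg
  set A : Set (F × F) := {a : F | a ≠ 0} ×ˢ {s : F | s ≠ 0 ∧ s ≠ 1 ∧ s ≠ c} with hA
  -- aux : v i2 = v i1 * c for v in extBallD h
  have key : ∀ v ∈ extBallD h, v i2 = v i1 * c := by
    intro v hv
    obtain ⟨l, e1, e2⟩ := extBallD_struct h01 h02 hz hv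
    rw [e1, e2, hc]
    field_simp
  have hmaps : g '' extBallD h ⊆ A := by
    rintro _ ⟨v, hv, rfl⟩
    have hv1 : v i1 ≠ 0 := Dq_ne_zero hv.2 i1
    refine ⟨hv1, ?_, ?_, ?_⟩
    · exact div_ne_zero (Dq_ne_zero hv.2 i0) hv1
    · intro hcc
      rw [div_eq_one_iff_eq hv1] at hcc
      exact Dq_ne hv.2 h01 hcc
    · intro hcc
      simp only [hg] at hcc
      apply Dq_ne hv.2 h02
      rw [key v hv, ← hcc, mul_comm, div_mul_cancel₀ _ hv1]
  have hinj : Set.InjOn g (extBallD h) := by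
    intro v hv w hw heq
    have hv1 : v i1 ≠ 0 := Dq_ne_zero hv.2 i1
    have hw1 : w i1 ≠ 0 := Dq_ne_zero hw.2 i1
    have e1 : v i1 = w i1 := congrArg Prod.fst heq
    have e0 : v i0 = w i0 := by
      have h2 : v i0 / v i1 = w i0 / w i1 := congrArg Prod.snd heq
      rw [e1, div_eq_div_iff hw1 hw1] at h2
      exact mul_right_cancel₀ hw1 h2
    have e2 : v i2 = w i2 := by rw [key v hv, key w hw, e1]
    funext i
    rcases fin3_cases i0 i1 i2 i h01 h02 h12 with rfl | rfl | rfl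
    · exact e0
    · exact e1
    · exact e2
  -- cardinality of A
  have hs1 : ({a : F | a ≠ 0}).ncard = q - 1 := by
    have hcompl : {a : F | a ≠ 0} = ({0} : Set F)ᶜ := by ext a; simp
    have h1 := Set.ncard_add_ncard_compl ({0} : Set F)
    rw [Set.ncard_singleton, Nat.card_eq_fintype_card, hcard] at h1
    rw [hcompl]; omega
  have hs2 : ({s : F | s ≠ 0 ∧ s ≠ 1 ∧ s ≠ c}).ncard = q - 3 := by
    have hcompl : {s : F | s ≠ 0 ∧ s ≠ 1 ∧ s ≠ c} = ({0, 1, c} : Set F)ᶜ := by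
      ext s; simp [not_or]
    have h3 : ({0, 1, c} : Set F).ncard = 3 := by
      rw [Set.ncard_insert_of_notMem (by simp [hc0.symm, (zero_ne_one (α := F))]),
        Set.ncard_insert_of_notMem (by simp [hc1.symm]), Set.ncard_singleton]
    have h1 := Set.ncard_add_ncard_compl ({0, 1, c} : Set F)
    rw [h3, Nat.card_eq_fintype_card, hcard] at h1
    rw [hcompl]; omega
  have hAcard : A.ncard = (q - 1) * (q - 3) := by
    rw [hA, ← Nat.card_coe_set_eq, Nat.card_congr (Equiv.Set.prod _ _), Nat.card_prod,
      Nat.card_coe_set_eq, Nat.card_coe_set_eq, hs1, hs2]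
  calc (extBallD h).ncard = (g '' extBallD h).ncard := (Set.ncard_image_of_injOn hinj).symm
    _ ≤ A.ncard := Set.ncard_le_ncard hmaps (Set.toFinite A)
    _ = (q - 1) * (q - 3) := hAcard

lemma Dq_ncard_ge [Fintype F] (q : ℕ) (hcard : Fintype.card F = q) (hq7 : 7 ≤ q) :
    (q - 1) * (q - 2) * (q - 3) ≤ (Dq : Set (Fin 3 → F)).ncard := by
  classical
  set Φ : (Fin 3 ↪ {x : F // x ≠ 0}) → (Fin 3 → F) := fun e i => (e i : F) with hΦ
  have hsub : Φ '' Set.univ ⊆ Dq := by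
    rintro _ ⟨e, -, rfl⟩
    have hne : ∀ i j : Fin 3, i ≠ j → (e i : F) ≠ (e j : F) := fun i j hij =>
      Subtype.coe_injective.ne (e.injective.ne hij)
    exact ⟨hne 0 1 (by decide), hne 0 2 (by decide), hne 1 2 (by decide),
      (e 0).2, (e 1).2, (e 2).2⟩
  have hinj : Function.Injective Φ := by
    intro e e' hee
    ext i
    exact congrFun hee i
  have hcard1 : Fintype.card {x : F // x ≠ 0} = q - 1 := by
    rw [Fintype.card_subtype_compl, Fintype.card_subtype_eq, hcard]
  have hcard2 : Fintype.card (Fin 3 ↪ {x : F // x ≠ 0}) = (q - 1) * (q - 2) * (q - 3) := by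
    rw [Fintype.card_embedding_eq, hcard1]
    show Nat.descFactorial _ 3 = _
    have e1 : q - 1 - 1 = q - 2 := by omega
    have e2 : q - 1 - 2 = q - 3 := by omega
    simp [Nat.descFactorial, e1, e2]
    ring
  calc (q - 1) * (q - 2) * (q - 3) = (Φ '' Set.univ).ncard := by
        rw [Set.ncard_image_of_injective _ hinj, Set.ncard_univ, Nat.card_eq_fintype_card,
          hcard2]
    _ ≤ (Dq : Set (Fin 3 → F)).ncard := Set.ncard_le_ncard hsub (Set.toFinite _)

lemma exists_h_zero [Fintype F] (q : ℕ) (hq7 : 7 ≤ q)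
    (hcard : Fintype.card F = q) (H : Set (Fin 3 → F))
    (hH : ShortCovering H) (hHcard : H.ncard ≤ (q + 2) / 2) (j : Fin 3) :
    ∃ h ∈ H, h j = 0 := by
  classical
  by_contra hcon
  push_neg at hcon
  have hex : ∀ j : Fin 3, ∃ j1 j2 : Fin 3, j ≠ j1 ∧ j ≠ j2 ∧ j1 ≠ j2 := by decide
  obtain ⟨j1, j2, hj1, hj2, hj12⟩ := hex j
  have hHfin : H.Finite := Set.toFinite H
  set Hfin : Finset (Fin 3 → F) := hHfin.toFinset with hHfin'
  set L : (Fin 3 → F) → Set (F × F) := fun h => Set.range (fun l : F => (l * h j1, l * h j2))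
    with hL
  -- covering of the plane
  have hcover : (Set.univ : Set (F × F)) ⊆
      ({p : F × F | p.1 = 0} ∪ {p : F × F | p.2 = 0}) ∪ ⋃ h ∈ Hfin, L h := by
    intro p _
    set v : Fin 3 → F := fun i => if i = j then 0 else if i = j1 then p.1 else p.2 with hv
    have hvj : v j = 0 := by simp [hv]
    have hvj1 : v j1 = p.1 := by simp [hv, hj1.symm]
    have hvj2 : v j2 = p.2 := by simp [hv, hj2.symm, hj12.symm]
    have hvU : v ∈ ⋃ h ∈ H, extBall h := by rw [hH]; trivial
    simp only [Set.mem_iUnion] at hvU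
    obtain ⟨h, hhH, hvE⟩ := hvU
    obtain ⟨l, hl⟩ := mem_extBall.mp hvE
    by_cases hl0 : l = 0
    · -- v is within distance 1 of 0, so p is on an axis
      left
      subst hl0
      by_contra hax
      simp only [Set.mem_union, Set.mem_setOf_eq, not_or] at hax
      have hsub2 : ({j1, j2} : Set (Fin 3)) ⊆ {k : Fin 3 | ((0 : F) • h) k ≠ v k} := by
        intro k hk
        rcases hk with rfl | hk
        · simp [hvj1]; exact fun hc => hax.1 hc.symm
        · simp only [Set.mem_singleton_iff] at hk; subst hk
          simp [hvj2]; exact fun hc => hax.2 hc.symm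
      have h2 : ({j1, j2} : Set (Fin 3)).ncard = 2 := Set.ncard_pair hj12
      have hle2 := Set.ncard_le_ncard hsub2 (Set.toFinite _)
      rw [h2] at hle2
      exact absurd (hle2.trans hl) (by norm_num)
    · right
      have hjne : (l • h) j ≠ v j := by
        simp only [Pi.smul_apply, smul_eq_mul, hvj]
        exact mul_ne_zero hl0 (hcon h hhH)
      have e1 := hdist_agree hl hj1.symm hjne
      have e2 := hdist_agree hl hj2.symm hjne
      simp only [Pi.smul_apply, smul_eq_mul] at e1 e2
      refine Set.mem_biUnion (hHfin.mem_toFinset.mpr hhH) ⟨l, ?_⟩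
      show (l * h j1, l * h j2) = p
      rw [e1, e2, hvj1, hvj2]
  -- counting
  have hax1 : ({p : F × F | p.1 = 0}).ncard ≤ q := by
    have : {p : F × F | p.1 = 0} = (fun y : F => ((0 : F), y)) '' Set.univ := by
      ext p; constructor
      · intro hp; exact ⟨p.2, trivial, by ext <;> simp_all⟩
      · rintro ⟨y, -, rfl⟩; rfl
    rw [this]
    calc ((fun y : F => ((0:F), y)) '' Set.univ).ncard ≤ (Set.univ : Set F).ncard :=
          Set.ncard_image_le (Set.toFinite _)
      _ = q := by rw [Set.ncard_univ, Nat.card_eq_fintype_card, hcard]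
  have hax2 : ({p : F × F | p.2 = 0}).ncard ≤ q := by
    have : {p : F × F | p.2 = 0} = (fun y : F => (y, (0 : F))) '' Set.univ := by
      ext p; constructor
      · intro hp; exact ⟨p.1, trivial, by ext <;> simp_all⟩
      · rintro ⟨y, -, rfl⟩; rfl
    rw [this]
    calc ((fun y : F => (y, (0:F))) '' Set.univ).ncard ≤ (Set.univ : Set F).ncard :=
          Set.ncard_image_le (Set.toFinite _)
      _ = q := by rw [Set.ncard_univ, Nat.card_eq_fintype_card, hcard]
  have hLle : ∀ h, (L h).ncard ≤ q := by
    intro h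
    rw [hL]
    calc (Set.range fun l : F => (l * h j1, l * h j2)).ncard
        = ((fun l : F => (l * h j1, l * h j2)) '' Set.univ).ncard := by rw [Set.image_univ]
      _ ≤ (Set.univ : Set F).ncard := Set.ncard_image_le (Set.toFinite _)
      _ = q := by rw [Set.ncard_univ, Nat.card_eq_fintype_card, hcard]
  have hbig : q * q ≤ q + q + Hfin.card * q := by
    have h0 : (Set.univ : Set (F × F)).ncard = q * q := by
      rw [Set.ncard_univ, Nat.card_eq_fintype_card, Fintype.card_prod, hcard]
    have h1 := Set.ncard_le_ncard hcover (Set.toFinite _)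
    have h2 := Set.ncard_union_le ({p : F × F | p.1 = 0} ∪ {p : F × F | p.2 = 0})
      (⋃ h ∈ Hfin, L h)
    have h3 := Set.ncard_union_le {p : F × F | p.1 = 0} {p : F × F | p.2 = 0}
    have h4 := ncard_biUnion_le Hfin L
    have h5 : ∑ h ∈ Hfin, (L h).ncard ≤ Hfin.card * q := by
      calc ∑ h ∈ Hfin, (L h).ncard ≤ Hfin.card • q :=
            Finset.sum_le_card_nsmul _ _ _ (fun h _ => hLle h)
        _ = Hfin.card * q := smul_eq_mul ..
    omega
  have hq0 : 0 < q := by omega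
  have hqle : q ≤ 2 + Hfin.card := by
    have := Nat.le_of_mul_le_mul_right (a := q) (by linarith [hbig] : q * q ≤ (2 + Hfin.card) * q) hq0
    exact this
  have hHc : Hfin.card = H.ncard := (Set.ncard_eq_toFinset_card H hHfin).symm
  omega

theorem stmt_15 (q : ℕ) (hq : IsPrimePow q) (hq7 : 7 ≤ q) (F : Type*) [Field F] [Fintype F]
    (hcard : Fintype.card F = q) (H : Set (Fin 3 → F))
    (hH : ShortCovering H) (hHcard : H.ncard ≤ (q + 2) / 2) :
    (∃ h ∈ H, ∀ i : Fin 3, h i ≠ 0) ∧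
    (∀ j : Fin 3, ∃ h ∈ H, h j = 0) := by
  classical
  constructor
  · by_contra hcon
    push_neg at hcon
    have hex : ∀ j : Fin 3, ∃ j1 j2 : Fin 3, j ≠ j1 ∧ j ≠ j2 ∧ j1 ≠ j2 := by decide
    have hHfin : H.Finite := Set.toFinite H
    set Hfin : Finset (Fin 3 → F) := hHfin.toFinset with hHfin'
    have hcover : (Dq : Set (Fin 3 → F)) ⊆ ⋃ h ∈ Hfin, extBallD h := by
      intro v hv
      have hvU : v ∈ ⋃ h ∈ H, extBall h := by rw [hH]; trivial
      simp only [Set.mem_iUnion] at hvU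
      obtain ⟨h, hhH, hvE⟩ := hvU
      exact Set.mem_biUnion (hHfin.mem_toFinset.mpr hhH) ⟨hvE, hv⟩
    have hper : ∀ h ∈ Hfin, (extBallD h).ncard ≤ (q - 1) * (q - 3) := by
      intro h hh
      obtain ⟨i, hi⟩ := hcon h (hHfin.mem_toFinset.mp hh)
      obtain ⟨i1, i2, d1, d2, d12⟩ := hex i
      exact extBallD_ncard_le q hcard h i i1 i2 d1 d2 d12 hi
    have h1 := Dq_ncard_ge (F := F) q hcard hq7
    have h2 := Set.ncard_le_ncard hcover (Set.toFinite _)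
    have h3 := ncard_biUnion_le Hfin extBallD
    have h4 : ∑ h ∈ Hfin, (extBallD h).ncard ≤ Hfin.card * ((q - 1) * (q - 3)) := by
      calc ∑ h ∈ Hfin, (extBallD h).ncard ≤ Hfin.card • ((q - 1) * (q - 3)) :=
            Finset.sum_le_card_nsmul _ _ _ hper
        _ = Hfin.card * ((q - 1) * (q - 3)) := smul_eq_mul ..
    have hKpos : 0 < (q - 1) * (q - 3) := by
      apply Nat.mul_pos <;> omega
    have hchain : ((q - 1) * (q - 3)) * (q - 2) ≤ ((q - 1) * (q - 3)) * Hfin.card := by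
      calc ((q - 1) * (q - 3)) * (q - 2) = (q - 1) * (q - 2) * (q - 3) := by ring
        _ ≤ Hfin.card * ((q - 1) * (q - 3)) := le_trans h1 (le_trans h2 (le_trans h3 h4))
        _ = ((q - 1) * (q - 3)) * Hfin.card := by ring
    have hfinal := Nat.le_of_mul_le_mul_left hchain hKpos
    have hHc : Hfin.card = H.ncard := (Set.ncard_eq_toFinset_card H hHfin).symm
    omega
  · intro j
    exact exists_h_zero q hq7 hcard H hH hHcard j
end

section
/- Let q be a prime power, let N be a subgroup of the symmetric group S₃ acting on 𝔽_q³ by permuting coordinates, and let L ⊆ 𝔽_q³ be a set invariant under the action of N (i.e., for every φ ∈ N, the image of L under φ equals L). Let A_q = {(u₁,u₂,u₃) ∈ 𝔽_q³ : u₁, u₂, u₃ are pairwise distinct}. Suppose that for every v ∈ A_q there exist a permutation φ ∈ N, a nonzero scalar ν ∈ 𝔽_q*, an element h ∈ L, scalars λ, μ ∈ 𝔽_q, and an index j ∈ {1,2,3} such that ν·(v^φ) = λh + μe_j, where e_j is the j-th standard basis vector and v^φ denotes v with coordinates permuted by φ. Then L ∪ {(1,1,1)} is a short covering of 𝔽_q³.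 -/
open Set Pointwise

variable {F : Type*} [Field F]

lemma hdist_le_one {F : Type*} [Field F] {u v : Fin 3 → F} (j : Fin 3)
    (h : ∀ i, i ≠ j → u i = v i) : hdist u v ≤ 1 := by
  have hsub : {i : Fin 3 | u i ≠ v i} ⊆ {j} := by
    intro i hi
    simp only [Set.mem_singleton_iff]
    by_contra hij
    exact hi (h i hij)
  calc hdist u v ≤ ({j} : Set (Fin 3)).ncard :=
        Set.ncard_le_ncard hsub (Set.finite_singleton j)
    _ = 1 := Set.ncard_singleton j

lemma mem_extBall_s16 {F : Type*} [Field F] {v u : Fin 3 → F} (c : F) (j : Fin 3)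
    (h : ∀ i, i ≠ j → (c • u) i = v i) : v ∈ extBall u := by
  exact Set.mem_iUnion.2 ⟨c, hdist_le_one j h⟩

theorem stmt_16 (q : ℕ) (hq : IsPrimePow q) (F : Type*) [Field F] [Fintype F]
    (hcard : Fintype.card F = q)
    (N : Subgroup (Equiv.Perm (Fin 3))) (L : Set (Fin 3 → F))
    (hL : ∀ φ ∈ N, (fun u : Fin 3 → F => u ∘ ⇑φ) '' L = L)
    (hcov : ∀ v : Fin 3 → F, (v 0 ≠ v 1 ∧ v 0 ≠ v 2 ∧ v 1 ≠ v 2) →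
        ∃ φ ∈ N, ∃ ν : F, ν ≠ 0 ∧ ∃ h ∈ L, ∃ l m : F, ∃ j : Fin 3,
          ν • (v ∘ ⇑φ) = l • h + m • (Pi.single j 1 : Fin 3 → F)) :
    ShortCovering (L ∪ {fun _ : Fin 3 => (1 : F)}) := by
  unfold ShortCovering
  ext v
  simp only [Set.mem_univ, iff_true, Set.mem_iUnion, Set.mem_union, Set.mem_singleton_iff]
  by_cases hd : v 0 ≠ v 1 ∧ v 0 ≠ v 2 ∧ v 1 ≠ v 2
  · obtain ⟨φ, hφ, ν, hν, h, hh, l, m, j, heq⟩ := hcov v hd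
    refine ⟨h ∘ ⇑(φ⁻¹ : Equiv.Perm (Fin 3)), Or.inl ?_, ?_⟩
    · rw [← hL φ⁻¹ (inv_mem hφ)]
      exact ⟨h, hh, rfl⟩
    · apply mem_extBall_s16 (ν⁻¹ * l) (φ j)
      intro i hi
      have hkey := congrFun heq ((φ⁻¹ : Equiv.Perm (Fin 3)) i)
      simp only [Pi.smul_apply, Pi.add_apply, Function.comp_apply, smul_eq_mul,
        (Equiv.Perm.eq_inv_iff_eq (f := φ) (x := φ⁻¹ i) (y := i)).mp rfl] at hkey ⊢
      have hij : (φ⁻¹ : Equiv.Perm (Fin 3)) i ≠ j := by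
        intro hcon
        apply hi
        rw [← hcon, (Equiv.Perm.eq_inv_iff_eq (f := φ) (x := φ⁻¹ i) (y := i)).mp rfl]
      rw [Pi.single_apply, if_neg hij, mul_zero, add_zero] at hkey
      rw [mul_assoc, ← hkey, inv_mul_cancel_left₀ hν]
  · push_neg at hd
    refine ⟨fun _ : Fin 3 => (1 : F), Or.inr rfl, ?_⟩
    by_cases h01 : v 0 = v 1
    · apply mem_extBall_s16 (v 0) 2
      intro i hi
      fin_cases i <;> simp_all [smul_eq_mul]
    · by_cases h02 : v 0 = v 2
      · apply mem_extBall_s16 (v 0) 1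
        intro i hi
        fin_cases i <;> simp_all [smul_eq_mul]
      · apply mem_extBall_s16 (v 1) 0
        intro i hi
        have h12 := hd h01 h02
        fin_cases i <;> simp_all [smul_eq_mul]
end

section
/- Let ξ be a generator of the multiplicative group 𝔽_8* of the finite field with 8 elements. Then the six-element set {(1,1,1), (0,0,ξ), (1,ξ,0), (1,ξ²,ξ³), (1,ξ³,ξ²), (ξ⁶,ξ⁵,1)} is a short covering of 𝔽_8³; in particular there exists a short covering of 𝔽_8³ with 6 elements. -/
open Set Pointwise

variable {F : Type*} [Field F]

lemma fin3_third {i j a b : Fin 3} (hij : i ≠ j) (hai : a ≠ i) (haj : a ≠ j)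
    (hbi : b ≠ i) (hbj : b ≠ j) : a = b := by
  revert hij hai haj hbi hbj
  revert i j a b
  decide

lemma aux_mem_extBall {u v : Fin 3 → F} (l : F) (i j : Fin 3) (hij : i ≠ j)
    (h1 : l * u i = v i) (h2 : l * u j = v j) : v ∈ extBall u := by
  refine Set.mem_iUnion.2 ⟨l, ?_⟩
  show hdist (l • u) v ≤ 1
  refine (Set.ncard_le_one).2 ?_
  intro a ha b hb
  simp only [Set.mem_setOf_eq, Pi.smul_apply, smul_eq_mul] at ha hb
  have hai : a ≠ i := by rintro rfl; exact ha h1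
  have haj : a ≠ j := by rintro rfl; exact ha h2
  have hbi : b ≠ i := by rintro rfl; exact hb h1
  have hbj : b ≠ j := by rintro rfl; exact hb h2
  exact fin3_third hij hai haj hbi hbj

omit [Field F] in
lemma vne {u w : Fin 3 → F} (i : Fin 3) (h : u i ≠ w i) : u ≠ w :=
  fun e => h (by rw [e])

set_option synthInstance.maxSize 2000 in
set_option maxHeartbeats 1000000 in
lemma grid : ∀ xa xb xc : ZMod 7, xb ≠ xa → xc ≠ xa → xc ≠ xb →
    (xa + 1 = xb ∨ xa + 2 = xb ∨ xa + 3 = xb ∨ xa + 6 = xb ∨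
     xa + 1 = xc ∨ xa + 2 = xc ∨ xa + 3 = xc ∨
     xb + 1 = xc ∨ xb + 2 = xc ∨ xb + 6 = xc) := by decide

set_option maxHeartbeats 1000000 in
theorem stmt_19 (ξ : (GaloisField 2 3)ˣ)
    (hξ : ∀ x : (GaloisField 2 3)ˣ, x ∈ Subgroup.zpowers ξ) :
    ShortCovering ({![1, 1, 1], ![0, 0, (ξ : GaloisField 2 3)],
        ![1, (ξ : GaloisField 2 3), 0],
        ![1, (ξ : GaloisField 2 3) ^ 2, (ξ : GaloisField 2 3) ^ 3],
        ![1, (ξ : GaloisField 2 3) ^ 3, (ξ : GaloisField 2 3) ^ 2],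
        ![(ξ : GaloisField 2 3) ^ 6, (ξ : GaloisField 2 3) ^ 5, 1]} :
      Set (Fin 3 → GaloisField 2 3)) ∧
    ∃ H : Set (Fin 3 → GaloisField 2 3), ShortCovering H ∧ H.ncard = 6 := by
  set z : GaloisField 2 3 := (ξ : GaloisField 2 3) with hzdef
  have hz0 : z ≠ 0 := ξ.ne_zero
  have hord : orderOf ξ = 7 := by
    rw [orderOf_eq_card_of_forall_mem_zpowers hξ, Nat.card_units,
      GaloisField.card 2 3 (by norm_num)]
    norm_num
  have key : ∀ m n : ℤ, z ^ m = z ^ n ↔ ((m : ZMod 7) = (n : ZMod 7)) := by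
    intro m n
    rw [hzdef, ← Units.val_zpow_eq_zpow_val, ← Units.val_zpow_eq_zpow_val, Units.val_inj,
      zpow_eq_zpow_iff_modEq, hord]
    exact (ZMod.intCast_eq_intCast_iff m n 7).symm
  have h70 : (7 : ZMod 7) = 0 := by decide
  have hcov : ShortCovering ({![1, 1, 1], ![0, 0, z], ![1, z, 0], ![1, z ^ 2, z ^ 3],
      ![1, z ^ 3, z ^ 2], ![z ^ 6, z ^ 5, 1]} : Set (Fin 3 → GaloisField 2 3)) := by
    unfold ShortCovering
    rw [Set.eq_univ_iff_forall]
    intro v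
    by_cases e01 : v 0 = v 1
    · refine Set.mem_biUnion (show (![1,1,1] : Fin 3 → _) ∈ _ by simp)
        (aux_mem_extBall (v 0) 0 1 (by decide) (by simp) (by simpa using e01))
    by_cases e02 : v 0 = v 2
    · refine Set.mem_biUnion (show (![1,1,1] : Fin 3 → _) ∈ _ by simp)
        (aux_mem_extBall (v 0) 0 2 (by decide) (by simp) (by simpa using e02))
    by_cases e12 : v 1 = v 2
    · refine Set.mem_biUnion (show (![1,1,1] : Fin 3 → _) ∈ _ by simp)
        (aux_mem_extBall (v 1) 1 2 (by decide) (by simp) (by simpa using e12))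
    by_cases z0 : v 0 = 0
    · refine Set.mem_biUnion (show (![0,0,z] : Fin 3 → _) ∈ _ by simp)
        (aux_mem_extBall (v 2 * z⁻¹) 0 2 (by decide) (by simpa using z0.symm) ?_)
      simp only [Matrix.cons_val_two, Matrix.tail_cons, Matrix.head_cons]
      rw [mul_assoc, inv_mul_cancel₀ hz0, mul_one]
    by_cases z1 : v 1 = 0
    · refine Set.mem_biUnion (show (![0,0,z] : Fin 3 → _) ∈ _ by simp)
        (aux_mem_extBall (v 2 * z⁻¹) 1 2 (by decide) (by simpa using z1.symm) ?_)
      simp only [Matrix.cons_val_two, Matrix.tail_cons, Matrix.head_cons]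
      rw [mul_assoc, inv_mul_cancel₀ hz0, mul_one]
    by_cases z2 : v 2 = 0
    · refine Set.mem_biUnion (show (![1,z,0] : Fin 3 → _) ∈ _ by simp)
        (aux_mem_extBall (v 0) 0 2 (by decide) (by simp) (by simpa using z2.symm))
    · obtain ⟨a, ha⟩ := Subgroup.mem_zpowers_iff.mp (hξ (Units.mk0 (v 0) z0))
      obtain ⟨b, hb⟩ := Subgroup.mem_zpowers_iff.mp (hξ (Units.mk0 (v 1) z1))
      obtain ⟨c, hc⟩ := Subgroup.mem_zpowers_iff.mp (hξ (Units.mk0 (v 2) z2))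
      have hva : z ^ a = v 0 := by rw [hzdef, ← Units.val_zpow_eq_zpow_val, ha]; rfl
      have hvb : z ^ b = v 1 := by rw [hzdef, ← Units.val_zpow_eq_zpow_val, hb]; rfl
      have hvc : z ^ c = v 2 := by rw [hzdef, ← Units.val_zpow_eq_zpow_val, hc]; rfl
      have hba : ((b : ZMod 7)) ≠ (a : ZMod 7) :=
        fun h => e01 (by rw [← hva, ← hvb, key]; exact h.symm)
      have hca : ((c : ZMod 7)) ≠ (a : ZMod 7) :=
        fun h => e02 (by rw [← hva, ← hvc, key]; exact h.symm)
      have hcb : ((c : ZMod 7)) ≠ (b : ZMod 7) :=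
        fun h => e12 (by rw [← hvb, ← hvc, key]; exact h.symm)
      rcases grid a b c hba hca hcb with h|h|h|h|h|h|h|h|h|h
      · -- a+1 = b : use ![1,z,0], coords 0,1
        refine Set.mem_biUnion (show (![1,z,0] : Fin 3 → _) ∈ _ by simp)
          (aux_mem_extBall (z ^ a) 0 1 (by decide) ?_ ?_)
        · simpa using hva
        · simp only [Matrix.cons_val_one, Matrix.head_cons, Matrix.cons_val_zero]
          rw [← hvb, ← zpow_add_one₀ hz0, key]; push_cast; linear_combination h
      · -- a+2 = b : ![1,z^2,z^3], coords 0,1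
        refine Set.mem_biUnion (show (![1,z^2,z^3] : Fin 3 → _) ∈ _ by simp)
          (aux_mem_extBall (z ^ a) 0 1 (by decide) ?_ ?_)
        · simpa using hva
        · simp only [Matrix.cons_val_one, Matrix.head_cons, Matrix.cons_val_zero]
          rw [← hvb, ← zpow_natCast z 2, ← zpow_add₀ hz0, key]; push_cast; linear_combination h
      · -- a+3 = b : ![1,z^3,z^2], coords 0,1
        refine Set.mem_biUnion (show (![1,z^3,z^2] : Fin 3 → _) ∈ _ by simp)
          (aux_mem_extBall (z ^ a) 0 1 (by decide) ?_ ?_)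
        · simpa using hva
        · simp only [Matrix.cons_val_one, Matrix.head_cons, Matrix.cons_val_zero]
          rw [← hvb, ← zpow_natCast z 3, ← zpow_add₀ hz0, key]; push_cast; linear_combination h
      · -- a+6 = b : ![z^6,z^5,1], coords 0,1
        refine Set.mem_biUnion (show (![z^6,z^5,1] : Fin 3 → _) ∈ _ by simp)
          (aux_mem_extBall (z ^ (a - 6)) 0 1 (by decide) ?_ ?_)
        · simp only [Matrix.cons_val_zero]
          rw [← hva, ← zpow_natCast z 6, ← zpow_add₀ hz0, key]; push_cast; ring
        · simp only [Matrix.cons_val_one, Matrix.head_cons, Matrix.cons_val_zero]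
          rw [← hvb, ← zpow_natCast z 5, ← zpow_add₀ hz0, key]; push_cast
          linear_combination h - h70
      · -- a+1 = c : ![z^6,z^5,1], coords 0,2
        refine Set.mem_biUnion (show (![z^6,z^5,1] : Fin 3 → _) ∈ _ by simp)
          (aux_mem_extBall (z ^ (a - 6)) 0 2 (by decide) ?_ ?_)
        · simp only [Matrix.cons_val_zero]
          rw [← hva, ← zpow_natCast z 6, ← zpow_add₀ hz0, key]; push_cast; ring
        · simp only [Matrix.cons_val_two, Matrix.tail_cons, Matrix.head_cons]
          rw [mul_one, ← hvc, key]; push_cast; linear_combination h - h70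
      · -- a+2 = c : ![1,z^3,z^2], coords 0,2
        refine Set.mem_biUnion (show (![1,z^3,z^2] : Fin 3 → _) ∈ _ by simp)
          (aux_mem_extBall (z ^ a) 0 2 (by decide) ?_ ?_)
        · simpa using hva
        · simp only [Matrix.cons_val_two, Matrix.tail_cons, Matrix.head_cons]
          rw [← hvc, ← zpow_natCast z 2, ← zpow_add₀ hz0, key]; push_cast; linear_combination h
      · -- a+3 = c : ![1,z^2,z^3], coords 0,2
        refine Set.mem_biUnion (show (![1,z^2,z^3] : Fin 3 → _) ∈ _ by simp)
          (aux_mem_extBall (z ^ a) 0 2 (by decide) ?_ ?_)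
        · simpa using hva
        · simp only [Matrix.cons_val_two, Matrix.tail_cons, Matrix.head_cons]
          rw [← hvc, ← zpow_natCast z 3, ← zpow_add₀ hz0, key]; push_cast; linear_combination h
      · -- b+1 = c : ![1,z^2,z^3], coords 1,2
        refine Set.mem_biUnion (show (![1,z^2,z^3] : Fin 3 → _) ∈ _ by simp)
          (aux_mem_extBall (z ^ (b - 2)) 1 2 (by decide) ?_ ?_)
        · simp only [Matrix.cons_val_one, Matrix.head_cons, Matrix.cons_val_zero]
          rw [← hvb, ← zpow_natCast z 2, ← zpow_add₀ hz0, key]; push_cast; ring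
        · simp only [Matrix.cons_val_two, Matrix.tail_cons, Matrix.head_cons]
          rw [← hvc, ← zpow_natCast z 3, ← zpow_add₀ hz0, key]; push_cast; linear_combination h
      · -- b+2 = c : ![z^6,z^5,1], coords 1,2
        refine Set.mem_biUnion (show (![z^6,z^5,1] : Fin 3 → _) ∈ _ by simp)
          (aux_mem_extBall (z ^ (b - 5)) 1 2 (by decide) ?_ ?_)
        · simp only [Matrix.cons_val_one, Matrix.head_cons, Matrix.cons_val_zero]
          rw [← hvb, ← zpow_natCast z 5, ← zpow_add₀ hz0, key]; push_cast; ring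
        · simp only [Matrix.cons_val_two, Matrix.tail_cons, Matrix.head_cons]
          rw [mul_one, ← hvc, key]; push_cast; linear_combination h - h70
      · -- b+6 = c : ![1,z^3,z^2], coords 1,2
        refine Set.mem_biUnion (show (![1,z^3,z^2] : Fin 3 → _) ∈ _ by simp)
          (aux_mem_extBall (z ^ (b - 3)) 1 2 (by decide) ?_ ?_)
        · simp only [Matrix.cons_val_one, Matrix.head_cons, Matrix.cons_val_zero]
          rw [← hvb, ← zpow_natCast z 3, ← zpow_add₀ hz0, key]; push_cast; ring
        · simp only [Matrix.cons_val_two, Matrix.tail_cons, Matrix.head_cons]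
          rw [← hvc, ← zpow_natCast z 2, ← zpow_add₀ hz0, key]; push_cast
          linear_combination h - h70
  refine ⟨hcov, _, hcov, ?_⟩
  -- distinctness facts
  have pne : ∀ m n : ℕ, ((m : ZMod 7) ≠ (n : ZMod 7)) → z ^ m ≠ z ^ n := by
    intro m n h e
    apply h
    have := (key m n).1 (by rw [zpow_natCast, zpow_natCast]; exact e)
    push_cast at this
    exact this
  have f02 : (1 : GaloisField 2 3) ≠ z ^ 2 := by simpa using pne 0 2 (by decide)
  have f03 : (1 : GaloisField 2 3) ≠ z ^ 3 := by simpa using pne 0 3 (by decide)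
  have f06 : (1 : GaloisField 2 3) ≠ z ^ 6 := by simpa using pne 0 6 (by decide)
  have f23 : z ^ 2 ≠ z ^ 3 := pne 2 3 (by decide)
  have dAB : (![1,1,1] : Fin 3 → GaloisField 2 3) ≠ ![0,0,z] := vne 0 (by simp)
  have dAC : (![1,1,1] : Fin 3 → GaloisField 2 3) ≠ ![1,z,0] := vne 2 (by simp)
  have dAD : (![1,1,1] : Fin 3 → GaloisField 2 3) ≠ ![1,z^2,z^3] := vne 1 (by simpa using f02)
  have dAE : (![1,1,1] : Fin 3 → GaloisField 2 3) ≠ ![1,z^3,z^2] := vne 1 (by simpa using f03)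
  have dAF : (![1,1,1] : Fin 3 → GaloisField 2 3) ≠ ![z^6,z^5,1] := vne 0 (by simpa using f06)
  have dBC : (![0,0,z] : Fin 3 → GaloisField 2 3) ≠ ![1,z,0] := vne 0 (by simp)
  have dBD : (![0,0,z] : Fin 3 → GaloisField 2 3) ≠ ![1,z^2,z^3] := vne 0 (by simp)
  have dBE : (![0,0,z] : Fin 3 → GaloisField 2 3) ≠ ![1,z^3,z^2] := vne 0 (by simp)
  have dBF : (![0,0,z] : Fin 3 → GaloisField 2 3) ≠ ![z^6,z^5,1] :=
    vne 0 (by simpa using (pow_ne_zero 6 hz0).symm)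
  have dCD : (![1,z,0] : Fin 3 → GaloisField 2 3) ≠ ![1,z^2,z^3] :=
    vne 2 (by simpa using (pow_ne_zero 3 hz0).symm)
  have dCE : (![1,z,0] : Fin 3 → GaloisField 2 3) ≠ ![1,z^3,z^2] :=
    vne 2 (by simpa using (pow_ne_zero 2 hz0).symm)
  have dCF : (![1,z,0] : Fin 3 → GaloisField 2 3) ≠ ![z^6,z^5,1] := vne 2 (by simp)
  have dDE : (![1,z^2,z^3] : Fin 3 → GaloisField 2 3) ≠ ![1,z^3,z^2] :=
    vne 1 (by simpa using f23)
  have dDF : (![1,z^2,z^3] : Fin 3 → GaloisField 2 3) ≠ ![z^6,z^5,1] :=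
    vne 0 (by simpa using f06)
  have dEF : (![1,z^3,z^2] : Fin 3 → GaloisField 2 3) ≠ ![z^6,z^5,1] :=
    vne 0 (by simpa using f06)
  rw [Set.ncard_insert_of_notMem (by
        simp only [Set.mem_insert_iff, Set.mem_singleton_iff]; push_neg
        exact ⟨dAB, dAC, dAD, dAE, dAF⟩),
      Set.ncard_insert_of_notMem (by
        simp only [Set.mem_insert_iff, Set.mem_singleton_iff]; push_neg
        exact ⟨dBC, dBD, dBE, dBF⟩),
      Set.ncard_insert_of_notMem (by
        simp only [Set.mem_insert_iff, Set.mem_singleton_iff]; push_neg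
        exact ⟨dCD, dCE, dCF⟩),
      Set.ncard_insert_of_notMem (by
        simp only [Set.mem_insert_iff, Set.mem_singleton_iff]; push_neg
        exact ⟨dDE, dDF⟩),
      Set.ncard_pair dEF]
end
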